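/- arXiv:1505.06057 — 7 statements merged into one kernel-verified Lean document; each statement's English description precedes it below -/
import Mathlib

section
/- For any Q ∈ ℕ, the partial sum |∑_{d=1}^{Q} μ(d)/d| ≤ 1, where μ is the Möbius function. -/
open Finset

lemma sum_divisors_moebius' (m : ℕ) :
    ∑ d ∈ m.divisors, (ArithmeticFunction.moebius d : ℤ) = if m = 1 then 1 else 0 := by
  have h : ((ArithmeticFunction.moebius * ArithmeticFunction.zeta : ArithmeticFunction ℤ)) m
      = (1 : ArithmeticFunction ℤ) m := by
    rw [ArithmeticFunction.moebius_mul_coe_zeta]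
  rwa [ArithmeticFunction.coe_mul_zeta_apply, ArithmeticFunction.one_apply] at h

lemma key_identity (n : ℕ) (hn : 1 ≤ n) :
    ∑ d ∈ Icc 1 n, (ArithmeticFunction.moebius d : ℤ) * ((n / d : ℕ) : ℤ) = 1 := by
  have h1 : ∀ d : ℕ, ((n / d : ℕ) : ℤ) = (((Icc 1 n).filter (d ∣ ·)).card : ℤ) := by
    intro d
    rw [← Nat.Ioc_filter_dvd_card_eq_div n d]
    congr 2
  calc ∑ d ∈ Icc 1 n, (ArithmeticFunction.moebius d : ℤ) * ((n / d : ℕ) : ℤ)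
      = ∑ d ∈ Icc 1 n, ∑ m ∈ Icc 1 n, if d ∣ m then (ArithmeticFunction.moebius d : ℤ) else 0 := by
        refine Finset.sum_congr rfl fun d _ => ?_
        rw [h1, ← Finset.sum_filter]
        simp [mul_comm]
    _ = ∑ m ∈ Icc 1 n, ∑ d ∈ Icc 1 n, if d ∣ m then (ArithmeticFunction.moebius d : ℤ) else 0 :=
        Finset.sum_comm
    _ = ∑ m ∈ Icc 1 n, ∑ d ∈ m.divisors, (ArithmeticFunction.moebius d : ℤ) := by
        refine Finset.sum_congr rfl fun m hm => ?_
        rw [← Finset.sum_filter]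
        congr 1
        obtain ⟨hm1, hm2⟩ := mem_Icc.mp hm
        ext d
        simp only [mem_filter, mem_Icc, Nat.mem_divisors]
        constructor
        · rintro ⟨⟨-, -⟩, h⟩; exact ⟨h, by omega⟩
        · rintro ⟨h, -⟩
          exact ⟨⟨Nat.one_le_iff_ne_zero.mpr (fun h0 => by simp [h0] at h; omega),
            le_trans (Nat.le_of_dvd (by omega) h) hm2⟩, h⟩
    _ = ∑ m ∈ Icc 1 n, if m = 1 then (1 : ℤ) else 0 := by
        exact Finset.sum_congr rfl fun m _ => sum_divisors_moebius' m
    _ = 1 := by rw [Finset.sum_ite_eq' (Icc 1 n) 1 (fun _ => (1:ℤ))]; simp [hn]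

theorem stmt2 (Q : ℕ) :
    |∑ d ∈ Finset.Icc 1 Q, ((ArithmeticFunction.moebius d : ℤ) : ℝ) / (d : ℝ)| ≤ 1 := by
  rcases Nat.lt_or_ge Q 2 with hQ | hQ
  · interval_cases Q <;> simp
  have key := key_identity Q (by omega)
  set S : ℝ := ∑ d ∈ Finset.Icc 1 Q, ((ArithmeticFunction.moebius d : ℤ) : ℝ) / (d : ℝ) with hS
  set E : ℝ := ∑ d ∈ Icc 1 Q, ((ArithmeticFunction.moebius d : ℤ) : ℝ) * ((Q % d : ℕ) : ℝ) / d
    with hEdef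
  have hQS : (Q : ℝ) * S = 1 + E := by
    rw [hS, Finset.mul_sum, hEdef]
    have hsplit : ∀ d ∈ Icc 1 Q, (Q:ℝ) * (((ArithmeticFunction.moebius d : ℤ) : ℝ) / d)
        = ((ArithmeticFunction.moebius d : ℤ) : ℝ) * ((Q / d : ℕ) : ℝ)
          + ((ArithmeticFunction.moebius d : ℤ) : ℝ) * ((Q % d : ℕ) : ℝ) / d := by
      intro d hd
      have hd1 : 1 ≤ d := (mem_Icc.mp hd).1
      have hd0 : (d:ℝ) ≠ 0 := Nat.cast_ne_zero.mpr (by omega)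
      have hdm : (d:ℝ) * ((Q/d : ℕ):ℝ) + ((Q % d : ℕ):ℝ) = (Q:ℝ) := by
        exact_mod_cast congrArg (Nat.cast : ℕ → ℝ) (Nat.div_add_mod Q d)
      rw [← hdm]
      field_simp
    rw [Finset.sum_congr rfl hsplit, Finset.sum_add_distrib]
    congr 1
    have h1 : ∑ d ∈ Icc 1 Q, ((ArithmeticFunction.moebius d : ℤ) : ℝ) * ((Q / d : ℕ) : ℝ)
        = 1 := by
      have h2 := congrArg (Int.cast : ℤ → ℝ) key
      rw [Int.cast_sum] at h2
      simp only [Int.cast_mul, Int.cast_natCast, Int.cast_one] at h2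
      exact h2
    rw [h1]
  have hfbound : ∀ d ∈ Icc 1 Q, |((ArithmeticFunction.moebius d : ℤ) : ℝ) * ((Q % d : ℕ) : ℝ) / d|
      ≤ if d = 1 ∨ d = Q then 0 else 1 := by
    intro d hd
    obtain ⟨hd1, hd2⟩ := mem_Icc.mp hd
    by_cases h : d = 1 ∨ d = Q
    · rcases h with h | h <;> simp [h, Nat.mod_self, Nat.mod_one]
    · push_neg at h
      rw [if_neg (by tauto)]
      rw [abs_div, abs_mul]
      have hm : |((ArithmeticFunction.moebius d : ℤ) : ℝ)| ≤ 1 := by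
        exact_mod_cast (ArithmeticFunction.abs_moebius_le_one (n := d))
      have hmod : ((Q % d : ℕ) : ℝ) ≤ (d : ℝ) := by
        exact_mod_cast (Nat.mod_lt Q (by omega : 0 < d)).le
      have hdpos : (0:ℝ) < d := by exact_mod_cast (by omega : 0 < d)
      rw [abs_of_nonneg (by positivity : (0:ℝ) ≤ ((Q % d : ℕ):ℝ)),
        abs_of_nonneg hdpos.le, div_le_one hdpos]
      nlinarith
  have hEb : |E| ≤ (Q : ℝ) - 2 := by
    calc |E| ≤ ∑ d ∈ Icc 1 Q, |((ArithmeticFunction.moebius d : ℤ) : ℝ) * ((Q % d : ℕ) : ℝ) / d| :=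
          Finset.abs_sum_le_sum_abs _ _
      _ ≤ ∑ d ∈ Icc 1 Q, (if d = 1 ∨ d = Q then (0:ℝ) else 1) := Finset.sum_le_sum hfbound
      _ ≤ (Q : ℝ) - 2 := by
          rw [Finset.sum_ite]
          simp only [Finset.sum_const_zero, Finset.sum_const, zero_add, nsmul_eq_mul, mul_one]
          have hcard : ((Icc 1 Q).filter (fun d => ¬(d = 1 ∨ d = Q))).card ≤ Q - 2 := by
            have : (Icc 1 Q).filter (fun d => ¬(d = 1 ∨ d = Q)) ⊆ Icc 2 (Q-1) := by
              intro d hd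
              simp only [mem_filter, mem_Icc] at hd ⊢
              omega
            calc _ ≤ (Icc 2 (Q-1)).card := Finset.card_le_card this
              _ = Q - 2 := by rw [Nat.card_Icc]; omega
          have := (Nat.cast_le (α := ℝ)).mpr hcard
          have h2 : ((Q - 2 : ℕ) : ℝ) = (Q:ℝ) - 2 := by
            push_cast [Nat.cast_sub (by omega : 2 ≤ Q)]; ring
          linarith [h2 ▸ this]
  have hQpos : (0:ℝ) < Q := by exact_mod_cast (by omega : 0 < Q)
  have : |(Q:ℝ) * S| ≤ (Q:ℝ) - 1 := by
    rw [hQS]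
    calc |1 + E| ≤ 1 + |E| := by
          have := abs_add_le (1:ℝ) E; simpa using this
      _ ≤ (Q:ℝ) - 1 := by linarith
  rw [abs_mul, abs_of_nonneg hQpos.le] at this
  have hSa : (Q:ℝ) * |S| ≤ Q := by linarith
  exact le_of_mul_le_mul_left (by linarith) hQpos
end

section
/- For any γ ∈ (0,1) and any integer t ≥ 1, the absolute value of the generalized binomial coefficient |(γ)_t / t!| = ∏_{s=1}^{t} |(γ+1-s)/s| is at most e^{(γ+1)²}/(t+1)^{1+γ}. -/
theorem stmt3 (γ : ℝ) (hγ0 : 0 < γ) (hγ1 : γ < 1) (t : ℕ) (ht : 1 ≤ t) :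
    ∏ s ∈ Finset.Icc 1 t, |(γ + 1 - (s : ℝ)) / (s : ℝ)| ≤
      Real.exp ((γ + 1) ^ 2) / ((t : ℝ) + 1) ^ (1 + γ) := by
  set p : ℝ := 1 + γ with hpdef
  have hp1 : (1 : ℝ) ≤ p := by simp [hpdef]; linarith
  have hp0 : (0 : ℝ) < p := by linarith
  have key : ∀ n : ℕ, 1 ≤ n → ∏ s ∈ Finset.Icc 1 n, |(γ + 1 - (s : ℝ)) / (s : ℝ)| ≤
      γ * Real.exp p / ((n : ℝ) + 1) ^ p := by
    intro n hn
    induction n, hn using Nat.le_induction with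
    | base =>
      have hprod : ∏ s ∈ Finset.Icc (1:ℕ) 1, |(γ + 1 - (s : ℝ)) / (s : ℝ)| = γ := by
        simp [abs_of_pos hγ0]
      rw [hprod]
      have h2 : ((1:ℝ) + 1) ^ p ≤ Real.exp p := by
        have : ((1:ℝ) + 1) ^ p ≤ (Real.exp 1) ^ p :=
          Real.rpow_le_rpow (by norm_num) (by linarith [Real.add_one_le_exp (1:ℝ)]) (le_of_lt hp0)
        rwa [← Real.exp_one_rpow p]
      rw [le_div_iff₀ (by positivity)]
      push_cast
      calc γ * ((1:ℝ)+1) ^ p ≤ γ * Real.exp p :=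
            mul_le_mul_of_nonneg_left h2 hγ0.le
        _ = γ * Real.exp p := rfl
    | succ n hn ih =>
      have hm : (2:ℝ) ≤ (n:ℝ) + 1 := by
        have : (1:ℝ) ≤ (n:ℝ) := by exact_mod_cast hn
        linarith
      set m : ℝ := (n:ℝ) + 1 with hmdef
      have hm0 : (0:ℝ) < m := by linarith
      rw [Finset.prod_Icc_succ_top (by omega : 1 ≤ n + 1)]
      have hcast : ((n+1 : ℕ) : ℝ) = m := by push_cast [hmdef]; ring
      have hfac : |(γ + 1 - ((n+1 : ℕ) : ℝ)) / ((n+1 : ℕ) : ℝ)| = 1 - p / m := by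
        rw [hcast, abs_div, abs_of_pos hm0, abs_of_nonpos (by linarith : γ + 1 - m ≤ 0)]
        field_simp [hpdef]
        ring
      rw [hfac]
      have hfac0 : (0:ℝ) ≤ 1 - p / m := by
        rw [sub_nonneg, div_le_one hm0, hpdef]; linarith
      have hstep : γ * Real.exp p / m ^ p * (1 - p / m) ≤ γ * Real.exp p / (m + 1) ^ p := by
        have hbern : 1 - p / (m + 1) ≤ (m / (m + 1)) ^ p := by
          have h1 : (-1 : ℝ) ≤ -(1 / (m + 1)) := by
            rw [neg_le_neg_iff, div_le_one (by linarith)]; linarith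
          have := one_add_mul_self_le_rpow_one_add h1 hp1
          have heq : (1 + -(1 / (m + 1))) = m / (m + 1) := by field_simp; ring
          rw [heq] at this
          calc 1 - p / (m + 1) = 1 + p * -(1 / (m + 1)) := by ring
            _ ≤ (m / (m + 1)) ^ p := this
        have hmono : 1 - p / m ≤ 1 - p / (m + 1) := by
          have : p / (m + 1) ≤ p / m := by
            apply div_le_div_of_nonneg_left hp0.le hm0; linarith
          linarith
        have hkey : 1 - p / m ≤ (m / (m + 1)) ^ p := le_trans hmono hbern
        have hrw : (m / (m + 1)) ^ p = m ^ p / (m + 1) ^ p :=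
          Real.div_rpow hm0.le (by linarith : (0:ℝ) ≤ m + 1) p
        rw [hrw] at hkey
        have hA : (0:ℝ) ≤ γ * Real.exp p := by positivity
        calc γ * Real.exp p / m ^ p * (1 - p / m)
            ≤ γ * Real.exp p / m ^ p * (m ^ p / (m + 1) ^ p) :=
              mul_le_mul_of_nonneg_left hkey (by positivity)
          _ = γ * Real.exp p / (m + 1) ^ p := by
              have hmp : m ^ p ≠ 0 := by positivity
              have hmp1 : (m + 1) ^ p ≠ 0 := by positivity
              field_simp
      calc (∏ s ∈ Finset.Icc 1 n, |(γ + 1 - (s : ℝ)) / (s : ℝ)|) * (1 - p / m)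
          ≤ γ * Real.exp p / m ^ p * (1 - p / m) :=
            mul_le_mul_of_nonneg_right ih hfac0
        _ ≤ γ * Real.exp p / (m + 1) ^ p := hstep
        _ = γ * Real.exp p / (((n+1 : ℕ) : ℝ) + 1) ^ p := by rw [hcast]
  refine le_trans (key t ht) ?_
  have hC : γ * Real.exp p ≤ Real.exp ((γ + 1) ^ 2) := by
    have h1 : Real.exp ((γ + 1) ^ 2) = Real.exp ((γ+1)*γ) * Real.exp p := by
      rw [← Real.exp_add, hpdef]; ring_nf
    rw [h1]
    have h2 : γ ≤ Real.exp ((γ+1)*γ) := by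
      have : (1:ℝ) ≤ Real.exp ((γ+1)*γ) := Real.one_le_exp (by positivity)
      linarith
    exact mul_le_mul_of_nonneg_right h2 (Real.exp_pos p).le
  gcongr
end

section
/- Let n, m, p ∈ ℕ and let ψ: ℕ → ℝ_{>0} be a decreasing function. If ∑_{(a,b)∈ℕ²} ψ(h_{a,b})/h_{a,b}^{1−1/p} < ∞, where h_{a,b} = max(aⁿ, bᵐ), then the set W of (x,y) ∈ [0,1)² such that |aⁿx + bᵐy − cᵖ| < ψ(h_{a,b}) holds for infinitely many (a,b,c) ∈ ℕ² × ℤ_{≥0} has Lebesgue measure zero. -/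
open MeasureTheory
open Set

lemma strip_y (a b γ ε : ℝ) (hb : 0 < b) :
    volume {xy : ℝ × ℝ | xy.1 ∈ Set.Ico (0:ℝ) 1 ∧ xy.2 ∈ Set.Ico (0:ℝ) 1 ∧
      |a * xy.1 + b * xy.2 - γ| < ε} ≤ ENNReal.ofReal (2 * ε / b) := by
  set S : Set (ℝ × ℝ) := {xy : ℝ × ℝ | xy.1 ∈ Set.Ico (0:ℝ) 1 ∧ xy.2 ∈ Set.Ico (0:ℝ) 1 ∧
      |a * xy.1 + b * xy.2 - γ| < ε} with hSdef
  have hS : MeasurableSet S := by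
    have h1 : MeasurableSet {xy : ℝ × ℝ | xy.1 ∈ Set.Ico (0:ℝ) 1} :=
      measurable_fst measurableSet_Ico
    have h2 : MeasurableSet {xy : ℝ × ℝ | xy.2 ∈ Set.Ico (0:ℝ) 1} :=
      measurable_snd measurableSet_Ico
    have h3 : MeasurableSet {xy : ℝ × ℝ | |a * xy.1 + b * xy.2 - γ| < ε} := by
      have : Measurable fun xy : ℝ × ℝ => |a * xy.1 + b * xy.2 - γ| := by fun_prop
      exact this measurableSet_Iio
    exact h1.inter (h2.inter h3)
  rw [Measure.volume_eq_prod, Measure.prod_apply hS]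
  have key : ∀ x : ℝ, volume (Prod.mk x ⁻¹' S) ≤
      (Set.Ico (0:ℝ) 1).indicator (fun _ => ENNReal.ofReal (2 * ε / b)) x := by
    intro x
    by_cases hx : x ∈ Set.Ico (0:ℝ) 1
    · rw [Set.indicator_of_mem hx]
      have hsub : Prod.mk x ⁻¹' S ⊆ Set.Ioo ((γ - a * x - ε) / b) ((γ - a * x + ε) / b) := by
        intro y hy
        obtain ⟨-, -, habs⟩ := hy
        rw [abs_lt] at habs
        constructor
        · rw [div_lt_iff₀ hb]; nlinarith [habs.1, habs.2]
        · rw [lt_div_iff₀ hb]; nlinarith [habs.1, habs.2]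
      calc volume (Prod.mk x ⁻¹' S) ≤ _ := measure_mono hsub
        _ = ENNReal.ofReal ((γ - a * x + ε) / b - (γ - a * x - ε) / b) := Real.volume_Ioo
        _ = ENNReal.ofReal (2 * ε / b) := by rw [div_sub_div_same]; ring_nf
    · rw [Set.indicator_of_notMem hx]
      have he : Prod.mk x ⁻¹' S = ∅ := by
        rw [Set.eq_empty_iff_forall_notMem]
        rintro y ⟨h1, -, -⟩; exact hx h1
      simp [he]
  calc ∫⁻ x, volume (Prod.mk x ⁻¹' S) ≤
      ∫⁻ x, (Set.Ico (0:ℝ) 1).indicator (fun _ => ENNReal.ofReal (2 * ε / b)) x :=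
        lintegral_mono key
    _ = ENNReal.ofReal (2 * ε / b) * volume (Set.Ico (0:ℝ) 1) := by
        rw [lintegral_indicator measurableSet_Ico]; simp
    _ ≤ ENNReal.ofReal (2 * ε / b) := by simp [Real.volume_Ico]

lemma strip_x (a b γ ε : ℝ) (ha : 0 < a) :
    volume {xy : ℝ × ℝ | xy.1 ∈ Set.Ico (0:ℝ) 1 ∧ xy.2 ∈ Set.Ico (0:ℝ) 1 ∧
      |a * xy.1 + b * xy.2 - γ| < ε} ≤ ENNReal.ofReal (2 * ε / a) := by
  set T : Set (ℝ × ℝ) := {xy : ℝ × ℝ | xy.1 ∈ Set.Ico (0:ℝ) 1 ∧ xy.2 ∈ Set.Ico (0:ℝ) 1 ∧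
      |b * xy.1 + a * xy.2 - γ| < ε} with hTdef
  have hT : MeasurableSet T := by
    have h3 : Measurable fun xy : ℝ × ℝ => |b * xy.1 + a * xy.2 - γ| := by fun_prop
    exact (measurable_fst measurableSet_Ico).inter
      ((measurable_snd measurableSet_Ico).inter (h3 measurableSet_Iio))
  have heq : {xy : ℝ × ℝ | xy.1 ∈ Set.Ico (0:ℝ) 1 ∧ xy.2 ∈ Set.Ico (0:ℝ) 1 ∧
      |a * xy.1 + b * xy.2 - γ| < ε} = Prod.swap ⁻¹' T := by
    ext xy
    simp only [Set.mem_preimage, Set.mem_setOf_eq, Prod.fst_swap, Prod.snd_swap, hTdef]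
    constructor
    · rintro ⟨h1, h2, h3⟩; exact ⟨h2, h1, by rwa [add_comm]⟩
    · rintro ⟨h1, h2, h3⟩; exact ⟨h2, h1, by rwa [add_comm]⟩
  rw [heq]
  have hmp : MeasurePreserving (Prod.swap : ℝ × ℝ → ℝ × ℝ) volume volume := by
    rw [Measure.volume_eq_prod]; exact Measure.measurePreserving_swap
  rw [hmp.measure_preimage hT.nullMeasurableSet]
  exact strip_y b a γ ε ha

lemma Emeas (n m p : ℕ) (hn : 1 ≤ n) (hm : 1 ≤ m) (hp : 1 ≤ p)
    (ψ : ℕ → ℝ) (hψpos : ∀ q, 0 < ψ q) (hψanti : Antitone ψ) (a b : ℕ)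
    (ha : 1 ≤ a) (hb : 1 ≤ b) :
    volume {xy : ℝ × ℝ | xy.1 ∈ Set.Ico (0:ℝ) 1 ∧ xy.2 ∈ Set.Ico (0:ℝ) 1 ∧
      ∃ c : ℕ, |(a:ℝ)^n * xy.1 + (b:ℝ)^m * xy.2 - (c:ℝ)^p| < ψ (max (a^n) (b^m))} ≤
    ENNReal.ofReal ((2 * ((⌈ψ 0⌉₊ : ℝ) + 3)) *
      (ψ (max (a^n) (b^m)) / ((max (a^n) (b^m) : ℕ) : ℝ) ^ (1 - 1/(p:ℝ)))) := by
  set h : ℕ := max (a^n) (b^m) with hh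
  set H : ℝ := ((h : ℕ) : ℝ) with hH
  have hA1 : (1:ℝ) ≤ (a:ℝ)^n := one_le_pow₀ (by exact_mod_cast ha)
  have hB1 : (1:ℝ) ≤ (b:ℝ)^m := one_le_pow₀ (by exact_mod_cast hb)
  have hH1 : (1:ℝ) ≤ H := by
    have h1 : 1 ≤ h := le_max_of_le_left (Nat.one_le_pow _ _ ha)
    rw [hH]; exact_mod_cast h1
  have hHpos : (0:ℝ) < H := lt_of_lt_of_le one_pos hH1
  have hAH : ((a:ℝ))^n ≤ H := by
    have : a^n ≤ h := le_max_left _ _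
    calc ((a:ℝ))^n = ((a^n : ℕ) : ℝ) := by push_cast; ring
      _ ≤ H := by rw [hH]; exact_mod_cast this
  have hBH : ((b:ℝ))^m ≤ H := by
    have : b^m ≤ h := le_max_right _ _
    calc ((b:ℝ))^m = ((b^m : ℕ) : ℝ) := by push_cast; ring
      _ ≤ H := by rw [hH]; exact_mod_cast this
  set K : ℕ := ⌈ψ 0⌉₊ + 2 with hK
  set N : ℕ := ⌊((K:ℝ) * H) ^ (1/(p:ℝ))⌋₊ + 1 with hN
  have hψh : 0 < ψ h := hψpos h
  have hψ0 : ψ h ≤ ψ 0 := hψanti (Nat.zero_le h)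
  have hp0 : (0:ℝ) < (p:ℝ) := by exact_mod_cast hp
  -- covering
  have hcov : {xy : ℝ × ℝ | xy.1 ∈ Set.Ico (0:ℝ) 1 ∧ xy.2 ∈ Set.Ico (0:ℝ) 1 ∧
      ∃ c : ℕ, |(a:ℝ)^n * xy.1 + (b:ℝ)^m * xy.2 - (c:ℝ)^p| < ψ h} ⊆
      ⋃ c ∈ Finset.range N, {xy : ℝ × ℝ | xy.1 ∈ Set.Ico (0:ℝ) 1 ∧ xy.2 ∈ Set.Ico (0:ℝ) 1 ∧
        |(a:ℝ)^n * xy.1 + (b:ℝ)^m * xy.2 - (c:ℝ)^p| < ψ h} := by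
    rintro ⟨x, y⟩ ⟨hx, hy, c, hc⟩
    refine Set.mem_biUnion ?_ ⟨hx, hy, hc⟩
    have hcp : (c:ℝ)^p < (K:ℝ) * H := by
      have h1 : (a:ℝ)^n * x + (b:ℝ)^m * y < 2 * H := by
        have := hx.2; have := hy.2; have := hx.1; have := hy.1
        nlinarith
      have h2 : (c:ℝ)^p < (a:ℝ)^n * x + (b:ℝ)^m * y + ψ h := by
        have := abs_lt.1 hc; linarith [this.1]
      have h3 : ψ h ≤ (⌈ψ 0⌉₊ : ℝ) := le_trans hψ0 (Nat.le_ceil _)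
      have h4 : (⌈ψ 0⌉₊ : ℝ) ≤ (⌈ψ 0⌉₊ : ℝ) * H := le_mul_of_one_le_right (Nat.cast_nonneg _) hH1
      have : (K:ℝ) = (⌈ψ 0⌉₊ : ℝ) + 2 := by push_cast [hK]; ring
      nlinarith
    have hcle : (c:ℝ) ≤ ((K:ℝ) * H) ^ (1/(p:ℝ)) := by
      have hKH : (0:ℝ) ≤ (K:ℝ) * H := by positivity
      have e1 : (c:ℝ) = (((c:ℝ)^p : ℝ)) ^ (1/(p:ℝ)) := by
        rw [← Real.rpow_natCast (c:ℝ) p, ← Real.rpow_mul (Nat.cast_nonneg c),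
          mul_one_div_cancel (ne_of_gt hp0), Real.rpow_one]
      rw [e1]
      exact Real.rpow_le_rpow (by positivity) (le_of_lt hcp) (by positivity)
    exact Finset.mem_range.2 (Nat.lt_succ_of_le (Nat.le_floor hcle))
  refine le_trans (measure_mono hcov) ?_
  refine le_trans (measure_biUnion_finset_le _ _) ?_
  have hstrip : ∀ c : ℕ, volume {xy : ℝ × ℝ | xy.1 ∈ Set.Ico (0:ℝ) 1 ∧ xy.2 ∈ Set.Ico (0:ℝ) 1 ∧
      |(a:ℝ)^n * xy.1 + (b:ℝ)^m * xy.2 - (c:ℝ)^p| < ψ h} ≤ ENNReal.ofReal (2 * ψ h / H) := by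
    intro c
    rcases max_cases (a^n) (b^m) with ⟨hmax, -⟩ | ⟨hmax, -⟩
    · have hHA : H = (a:ℝ)^n := by rw [hH, hh, hmax]; push_cast; ring
      rw [hHA]
      exact strip_x _ _ _ _ (by positivity)
    · have hHB : H = (b:ℝ)^m := by rw [hH, hh, hmax]; push_cast; ring
      rw [hHB]
      exact strip_y _ _ _ _ (by positivity)
  refine le_trans (Finset.sum_le_sum fun c _ => hstrip c) ?_
  rw [Finset.sum_const, Finset.card_range, nsmul_eq_mul]
  -- (N : ℝ≥0∞) * ofReal (2ψh/H) ≤ ofReal (C * (ψh / H^(1-1/p)))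
  rw [← ENNReal.ofReal_natCast N, ← ENNReal.ofReal_mul (Nat.cast_nonneg N)]
  apply ENNReal.ofReal_le_ofReal
  -- real inequality
  set u : ℝ := H ^ (1/(p:ℝ)) with hu
  have hu1 : (1:ℝ) ≤ u := Real.one_le_rpow hH1 (by positivity)
  have hupos : (0:ℝ) < u := lt_of_lt_of_le one_pos hu1
  have hsplit : H ^ (1 - 1/(p:ℝ)) * u = H := by
    rw [hu, ← Real.rpow_add hHpos]; ring_nf; exact Real.rpow_one H
  have hNle : (N:ℝ) ≤ ((K:ℝ) + 1) * u := by
    have h1 : (N:ℝ) ≤ ((K:ℝ) * H) ^ (1/(p:ℝ)) + 1 := by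
      have h0 := Nat.floor_le (R := ℝ) (show (0:ℝ) ≤ ((K:ℝ)*H)^(1/(p:ℝ)) by positivity)
      have hNc : (N:ℝ) = (⌊((K:ℝ) * H) ^ (1/(p:ℝ))⌋₊ : ℝ) + 1 := by exact_mod_cast hN
      linarith
    have h2 : ((K:ℝ) * H) ^ (1/(p:ℝ)) = (K:ℝ)^(1/(p:ℝ)) * u := by
      rw [Real.mul_rpow (Nat.cast_nonneg K) (le_of_lt hHpos)]
    have hK1 : (1:ℝ) ≤ (K:ℝ) := by
      have : 1 ≤ K := by omega
      exact_mod_cast this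
    have h3 : (K:ℝ)^(1/(p:ℝ)) ≤ (K:ℝ) := by
      calc (K:ℝ)^(1/(p:ℝ)) ≤ (K:ℝ)^(1:ℝ) :=
            Real.rpow_le_rpow_of_exponent_le hK1 (by
              rw [div_le_one hp0]; exact_mod_cast hp)
        _ = (K:ℝ) := Real.rpow_one _
    nlinarith
  have hKc : (K:ℝ) + 1 = (⌈ψ 0⌉₊ : ℝ) + 3 := by push_cast [hK]; ring
  have hpow_pos : (0:ℝ) < H ^ (1 - 1/(p:ℝ)) := Real.rpow_pos_of_pos hHpos _
  have key : ψ h / H ^ (1 - 1/(p:ℝ)) = ψ h * u / H := by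
    rw [div_eq_div_iff (ne_of_gt hpow_pos) (ne_of_gt hHpos)]
    linear_combination (-(ψ h)) * hsplit
  rw [← hKc, key]
  have : (N:ℝ) * (2 * ψ h / H) ≤ (((K:ℝ)+1) * u) * (2 * ψ h / H) := by
    apply mul_le_mul_of_nonneg_right hNle
    positivity
  calc (N:ℝ) * (2 * ψ h / H) ≤ (((K:ℝ)+1) * u) * (2 * ψ h / H) := this
    _ = 2 * ((K:ℝ)+1) * (ψ h * u / H) := by ring

theorem stmt5 (n m p : ℕ) (hn : 1 ≤ n) (hm : 1 ≤ m) (hp : 1 ≤ p)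
    (ψ : ℕ → ℝ) (hψpos : ∀ q, 0 < ψ q) (hψanti : Antitone ψ)
    (hsum : Summable (fun ab : ℕ × ℕ =>
      ψ (max ((ab.1 + 1) ^ n) ((ab.2 + 1) ^ m)) /
        ((max ((ab.1 + 1) ^ n) ((ab.2 + 1) ^ m) : ℕ) : ℝ) ^ (1 - 1 / (p : ℝ)))) :
    volume {xy : ℝ × ℝ | xy.1 ∈ Set.Ico (0 : ℝ) 1 ∧ xy.2 ∈ Set.Ico (0 : ℝ) 1 ∧
      {abc : ℕ × ℕ × ℕ | 1 ≤ abc.1 ∧ 1 ≤ abc.2.1 ∧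
        |(abc.1 : ℝ) ^ n * xy.1 + (abc.2.1 : ℝ) ^ m * xy.2 - (abc.2.2 : ℝ) ^ p| <
          ψ (max (abc.1 ^ n) (abc.2.1 ^ m))}.Infinite} = 0 := by
  set E : ℕ × ℕ → Set (ℝ × ℝ) := fun q =>
    {xy : ℝ × ℝ | xy.1 ∈ Set.Ico (0:ℝ) 1 ∧ xy.2 ∈ Set.Ico (0:ℝ) 1 ∧
      ∃ c : ℕ, |((q.1 + 1 : ℕ):ℝ)^n * xy.1 + ((q.2 + 1 : ℕ):ℝ)^m * xy.2 - (c:ℝ)^p| <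
        ψ (max ((q.1 + 1)^n) ((q.2 + 1)^m))} with hE
  have hbound : ∀ q : ℕ × ℕ, volume (E q) ≤ ENNReal.ofReal ((2 * ((⌈ψ 0⌉₊ : ℝ) + 3)) *
      (ψ (max ((q.1 + 1)^n) ((q.2 + 1)^m)) /
        ((max ((q.1 + 1)^n) ((q.2 + 1)^m) : ℕ) : ℝ) ^ (1 - 1/(p:ℝ)))) := fun q =>
    Emeas n m p hn hm hp ψ hψpos hψanti (q.1 + 1) (q.2 + 1)
      (Nat.succ_le_succ (Nat.zero_le _)) (Nat.succ_le_succ (Nat.zero_le _))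
  have htsum : ∑' q : ℕ × ℕ, volume (E q) ≠ ⊤ := by
    set C : ℝ := 2 * ((⌈ψ 0⌉₊ : ℝ) + 3) with hC
    set f : ℕ × ℕ → ℝ := fun ab =>
      ψ (max ((ab.1 + 1) ^ n) ((ab.2 + 1) ^ m)) /
        ((max ((ab.1 + 1) ^ n) ((ab.2 + 1) ^ m) : ℕ) : ℝ) ^ (1 - 1 / (p : ℝ)) with hf
    have hf_nonneg : ∀ q, 0 ≤ C * f q := by
      intro q
      have h1 : 0 < ψ (max ((q.1 + 1) ^ n) ((q.2 + 1) ^ m)) := hψpos _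
      have h2 : (0:ℝ) ≤ ((max ((q.1 + 1) ^ n) ((q.2 + 1) ^ m) : ℕ) : ℝ) ^ (1 - 1/(p:ℝ)) := by
        positivity
      have h3 : (0:ℝ) ≤ C := by positivity
      have : 0 ≤ f q := div_nonneg (le_of_lt h1) h2
      positivity
    have hsum2 : Summable (fun q => C * f q) := hsum.mul_left C
    have hle : ∑' q : ℕ × ℕ, volume (E q) ≤ ∑' q : ℕ × ℕ, ENNReal.ofReal (C * f q) := by
      refine ENNReal.tsum_le_tsum fun q => ?_
      refine le_trans (hbound q) (le_of_eq ?_)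
      rw [hf]
    rw [← ENNReal.ofReal_tsum_of_nonneg hf_nonneg hsum2] at hle
    exact ne_top_of_le_ne_top ENNReal.ofReal_ne_top hle
  have hBC : ∀ᵐ xy : ℝ × ℝ ∂volume, {q : ℕ × ℕ | xy ∈ E q}.Finite :=
    ae_finite_setOf_mem htsum
  have h0 : volume {xy : ℝ × ℝ | ¬ ({q : ℕ × ℕ | xy ∈ E q}.Finite)} = 0 := ae_iff.1 hBC
  refine measure_mono_null ?_ h0
  rintro ⟨x, y⟩ ⟨hx, hy, hinf⟩
  simp only [Set.mem_setOf_eq]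
  intro hfin
  apply hinf
  refine Set.Finite.subset (Set.Finite.biUnion hfin (fun q _ =>
    (Set.finite_Iic ((q.1+1)^n + (q.2+1)^m + ⌈ψ 0⌉₊)).image
      (fun c => (q.1 + 1, q.2 + 1, c)))) ?_
  rintro ⟨a, b, c⟩ ⟨ha', hb', habs'⟩
  have ha : 1 ≤ a := ha'
  have hb : 1 ≤ b := hb'
  have habs : |(a : ℝ) ^ n * x + (b : ℝ) ^ m * y - (c : ℝ) ^ p| <
      ψ (max (a ^ n) (b ^ m)) := habs'
  have hq1 : a - 1 + 1 = a := by omega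
  have hq2 : b - 1 + 1 = b := by omega
  have hA1 : (1:ℝ) ≤ (a:ℝ)^n := one_le_pow₀ (by exact_mod_cast ha)
  have hB1 : (1:ℝ) ≤ (b:ℝ)^m := one_le_pow₀ (by exact_mod_cast hb)
  have hcle : c ≤ a^n + b^m + ⌈ψ 0⌉₊ := by
    have h1 : (c:ℝ)^p < (a:ℝ)^n * x + (b:ℝ)^m * y + ψ (max (a^n) (b^m)) := by
      have := abs_lt.1 habs; linarith [this.1]
    have h2 : (a:ℝ)^n * x ≤ (a:ℝ)^n := by nlinarith [hx.1, hx.2]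
    have h3 : (b:ℝ)^m * y ≤ (b:ℝ)^m := by nlinarith [hy.1, hy.2]
    have h4 : ψ (max (a^n) (b^m)) ≤ (⌈ψ 0⌉₊ : ℝ) :=
      le_trans (hψanti (Nat.zero_le _)) (Nat.le_ceil _)
    have h5 : (c:ℝ) ≤ (c:ℝ)^p := by
      rcases Nat.eq_zero_or_pos c with rfl | hc
      · simp
      · exact le_self_pow₀ (by exact_mod_cast hc) (by omega)
    have h6 : (c:ℝ) < ((a^n + b^m + ⌈ψ 0⌉₊ : ℕ) : ℝ) := by push_cast; linarith
    exact le_of_lt (by exact_mod_cast h6)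
  refine Set.mem_biUnion (show (a - 1, b - 1) ∈ {q : ℕ × ℕ | (x, y) ∈ E q} from ?_) ?_
  · refine ⟨hx, hy, c, ?_⟩
    simp only [hq1, hq2]
    exact habs
  · refine ⟨c, ?_, ?_⟩
    · simp only [Set.mem_Iic, hq1, hq2]; exact hcle
    · simp only [hq1, hq2]
end

section
/- Fix n, m ∈ ℕ. For t ∈ ℤ_{≥0}, let A_t = {(a,b) ∈ ℕ² : gcd(a,b)=1, 1/2 < aⁿ/bᵐ < 2, aⁿ > bᵐ, 2^t ≤ a < 2^{t+1}}. Then the cardinality α_t of A_t satisfies α_t ≍ 2^{(n/m + 1)t}, i.e., there exist constants c₁, c₂ > 0 depending only on n, m with c₁·2^{(n/m+1)t} ≤ α_t ≤ c₂·2^{(n/m+1)t} for all sufficiently large t. -/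
open Finset Real

namespace Stmt8
set_option maxHeartbeats 1000000

variable (n m : ℕ)

/-- valid b's for given a -/
def V (a : ℕ) : Finset ℕ :=
  (Finset.range (a ^ n + 1)).filter fun b => a ^ n < 2 * b ^ m ∧ b ^ m < a ^ n

/-- valid coprime b's -/
def W (a : ℕ) : Finset ℕ := (V n m a).filter fun b => Nat.Coprime a b

noncomputable def vr (r : ℝ) : ℝ := (r ^ n) ^ ((m : ℝ)⁻¹)
noncomputable def ur (r : ℝ) : ℝ := (r ^ n / 2) ^ ((m : ℝ)⁻¹)
noncomputable def cst : ℝ := ((2 : ℝ) ^ ((m : ℝ)⁻¹))⁻¹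

variable {n m}

lemma cst_pos (m : ℕ) : 0 < cst m := by
  have : (0:ℝ) < (2 : ℝ) ^ ((m : ℝ)⁻¹) := Real.rpow_pos_of_pos two_pos _
  exact inv_pos.2 this

lemma cst_lt_one (hm : 1 ≤ m) : cst m < 1 := by
  have h1 : (1:ℝ) < (2 : ℝ) ^ ((m : ℝ)⁻¹) := by
    apply Real.one_lt_rpow_iff_of_pos two_pos |>.2
    exact Or.inl ⟨by norm_num, by positivity⟩
  simpa [cst] using inv_lt_one_of_one_lt₀ h1

lemma ur_eq (hm : 1 ≤ m) {r : ℝ} (hr : 0 ≤ r) : ur n m r = cst m * vr n m r := by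
  unfold ur vr cst
  rw [Real.div_rpow (by positivity) (by norm_num)]
  rw [div_eq_mul_inv, mul_comm]

lemma vr_nonneg {r : ℝ} (hr : 0 ≤ r) : 0 ≤ vr n m r := by
  unfold vr; positivity

lemma ur_nonneg {r : ℝ} (hr : 0 ≤ r) : 0 ≤ ur n m r := by
  unfold ur; positivity

lemma vr_mono (n m : ℕ) {r s : ℝ} (hr : 0 ≤ r) (h : r ≤ s) : vr n m r ≤ vr n m s := by
  unfold vr
  exact Real.rpow_le_rpow (by positivity) (pow_le_pow_left₀ hr h n) (by positivity)

lemma one_le_vr (hm : 1 ≤ m) {r : ℝ} (hr : 1 ≤ r) : 1 ≤ vr n m r := by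
  unfold vr
  exact Real.one_le_rpow (one_le_pow₀ hr) (by positivity)

lemma mem_V (hm : 1 ≤ m) {a b : ℕ} (ha : 1 ≤ a) :
    b ∈ V n m a ↔ ur n m a < b ∧ (b : ℝ) < vr n m a := by
  have hm' : (0:ℝ) < (m:ℝ) := by positivity
  have h1 : ((b : ℝ) < vr n m a ↔ b ^ m < a ^ n) := by
    rw [vr, Real.lt_rpow_inv_iff_of_pos (by positivity) (by positivity) hm',
      Real.rpow_natCast]
    exact_mod_cast Iff.rfl
  have h2 : (ur n m a < b ↔ a ^ n < 2 * b ^ m) := by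
    rw [ur, Real.rpow_inv_lt_iff_of_pos (by positivity) (by positivity) hm',
      Real.rpow_natCast, div_lt_iff₀ (by norm_num : (0:ℝ) < 2), mul_comm]
    exact_mod_cast Iff.rfl
  rw [h1, h2]
  simp only [V, Finset.mem_filter, Finset.mem_range]
  constructor
  · rintro ⟨-, h, h'⟩; exact ⟨h, h'⟩
  · rintro ⟨h, h'⟩
    refine ⟨?_, h, h'⟩
    have hb1 : 1 ≤ b := by
      rcases Nat.eq_zero_or_pos b with rfl | h0
      · rw [Nat.zero_pow (by omega : 0 < m)] at h; omega
      · exact h0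
    calc b < b + 1 := by omega
    _ ≤ b ^ m + 1 := by
        have := Nat.le_self_pow (by omega : m ≠ 0) b
        omega
    _ ≤ a ^ n + 1 := by omega

lemma V_eq_Ioo (hm : 1 ≤ m) {a : ℕ} (ha : 1 ≤ a) :
    V n m a = Finset.Ioo ⌊ur n m a⌋₊ ⌈vr n m a⌉₊ := by
  ext b
  rw [mem_V hm ha, Finset.mem_Ioo, Nat.floor_lt (ur_nonneg (by positivity)), Nat.lt_ceil]

lemma cardV_lower (hm : 1 ≤ m) {a : ℕ} (ha : 1 ≤ a) :
    (1 - cst m) * vr n m (a : ℝ) - 1 ≤ ((V n m a).card : ℝ) := by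
  have ha' : (0:ℝ) ≤ (a:ℝ) := by positivity
  have hu := ur_nonneg (n := n) (m := m) ha'
  have hv := vr_nonneg (n := n) (m := m) ha'
  rw [V_eq_Ioo hm ha, Nat.card_Ioo]
  set cv := ⌈vr n m (a:ℝ)⌉₊ with hcv
  set fu := ⌊ur n m (a:ℝ)⌋₊ with hfu
  have h1 : vr n m (a:ℝ) ≤ (cv : ℝ) := Nat.le_ceil _
  have h2 : (fu : ℝ) ≤ ur n m (a:ℝ) := Nat.floor_le hu
  have key : (1 - cst m) * vr n m (a:ℝ) = vr n m (a:ℝ) - ur n m (a:ℝ) := by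
    rw [ur_eq hm ha']; ring
  rw [key]
  by_cases h : cv ≤ fu + 1
  · have : vr n m (a:ℝ) ≤ ur n m (a:ℝ) + 1 := by
      calc vr n m (a:ℝ) ≤ (cv:ℝ) := h1
      _ ≤ (fu:ℝ) + 1 := by exact_mod_cast h
      _ ≤ ur n m (a:ℝ) + 1 := by linarith
    have h0 : (0:ℝ) ≤ ((cv - fu - 1 : ℕ) : ℝ) := by positivity
    linarith
  · push_neg at h
    have hc : ((cv - fu - 1 : ℕ) : ℝ) = (cv:ℝ) - fu - 1 := by
      rw [Nat.sub_sub, Nat.cast_sub (by omega : fu + 1 ≤ cv)]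
      push_cast; ring
    rw [hc]
    linarith

lemma cardV_upper (hm : 1 ≤ m) {a : ℕ} (ha : 1 ≤ a) :
    ((V n m a).card : ℝ) ≤ vr n m (a : ℝ) := by
  have ha' : (0:ℝ) ≤ (a:ℝ) := by positivity
  have hv := vr_nonneg (n := n) (m := m) ha'
  rw [V_eq_Ioo hm ha, Nat.card_Ioo]
  set cv := ⌈vr n m (a:ℝ)⌉₊ with hcv
  set fu := ⌊ur n m (a:ℝ)⌋₊ with hfu
  rcases Nat.eq_zero_or_pos cv with h0 | h0
  · simp [h0, hv]
  · have h1 : (cv:ℝ) < vr n m (a:ℝ) + 1 := Nat.ceil_lt_add_one hv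
    have : (cv - fu - 1 : ℕ) ≤ cv - 1 := by omega
    calc ((cv - fu - 1 : ℕ) : ℝ) ≤ ((cv - 1 : ℕ) : ℝ) := by exact_mod_cast this
    _ = (cv:ℝ) - 1 := by push_cast [Nat.cast_sub (by omega : 1 ≤ cv)]; ring
    _ ≤ vr n m (a:ℝ) := by linarith

lemma cardV_dvd (hm : 1 ≤ m) {a d : ℕ} (ha : 1 ≤ a) (hd : 1 ≤ d) :
    (((V n m a).filter (fun b => d ∣ b)).card : ℝ) ≤
      (1 - cst m) * vr n m (a:ℝ) / d + 1 := by
  have ha' : (0:ℝ) ≤ (a:ℝ) := by positivity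
  have hd' : (0:ℝ) < (d:ℝ) := by exact_mod_cast hd
  have hu := ur_nonneg (n := n) (m := m) ha'
  have hv := vr_nonneg (n := n) (m := m) ha'
  have hc1 := cst_lt_one hm
  have huv : ur n m (a:ℝ) = cst m * vr n m (a:ℝ) := ur_eq hm ha'
  set u := ur n m (a:ℝ)
  set v := vr n m (a:ℝ)
  have hcard : ((V n m a).filter (fun b => d ∣ b)).card ≤
      (Finset.Ioo ⌊u / d⌋₊ ⌈v / d⌉₊).card := by
    apply Finset.card_le_card_of_injOn (fun b => b / d)
    · intro b hb
      simp only [Finset.mem_coe, Finset.mem_filter] at hb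
      obtain ⟨hbV, k, rfl⟩ := hb
      rw [mem_V hm ha] at hbV
      have hk : ((d * k : ℕ) : ℝ) = (d:ℝ) * k := by push_cast; ring
      simp only [Finset.mem_coe, Finset.mem_Ioo]
      constructor
      · rw [Nat.mul_div_cancel_left k (by omega : 0 < d)]
        rw [Nat.floor_lt (by positivity)]
        rw [div_lt_iff₀ hd']
        calc u < ((d * k : ℕ) : ℝ) := hbV.1
        _ = (k:ℝ) * d := by push_cast; ring
      · rw [Nat.mul_div_cancel_left k (by omega : 0 < d)]
        rw [Nat.lt_ceil]
        rw [lt_div_iff₀ hd']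
        calc (k:ℝ) * d = ((d * k : ℕ) : ℝ) := by push_cast; ring
        _ < v := hbV.2
    · intro b₁ h₁ b₂ h₂ he
      simp only [Finset.mem_coe, Finset.mem_filter] at h₁ h₂
      obtain ⟨-, k₁, rfl⟩ := h₁
      obtain ⟨-, k₂, rfl⟩ := h₂
      simp only [Nat.mul_div_cancel_left _ (by omega : 0 < d)] at he
      rw [he]
  calc (((V n m a).filter (fun b => d ∣ b)).card : ℝ)
      ≤ ((Finset.Ioo ⌊u / d⌋₊ ⌈v / d⌉₊).card : ℝ) := by exact_mod_cast hcard
  _ ≤ (1 - cst m) * v / d + 1 := by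
      rw [Nat.card_Ioo]
      set cv := ⌈v / d⌉₊
      set fu := ⌊u / d⌋₊
      have h1 : (cv:ℝ) < v / d + 1 := Nat.ceil_lt_add_one (by positivity)
      have h2 : u / d - 1 < (fu:ℝ) := by
        have := Nat.lt_floor_add_one (u / d)
        linarith
      have key : (1 - cst m) * v / d = v / d - u / d := by
        rw [huv]; ring
      rw [key]
      by_cases h : cv ≤ fu + 1
      · have h0 : (0:ℝ) ≤ ((cv - fu - 1 : ℕ) : ℝ) := by positivity
        have huvle : u ≤ v := by rw [huv]; nlinarith [cst_pos m]
        have hud : u / d ≤ v / d := by gcongr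
        have : ((cv - fu - 1:ℕ):ℝ) = 0 := by
          have : cv - fu - 1 = 0 := by omega
          simp [this]
        rw [this]
        linarith
      · push_neg at h
        have hc : ((cv - fu - 1 : ℕ) : ℝ) = (cv:ℝ) - fu - 1 := by
          rw [Nat.sub_sub, Nat.cast_sub (by omega : fu + 1 ≤ cv)]
          push_cast; ring
        rw [hc]
        linarith

lemma count_dvd_Ico {x y d : ℕ} (hd : 1 ≤ d) :
    (((Finset.Ico x (x + y)).filter (fun a => d ∣ a)).card : ℝ) ≤ (y:ℝ) / d + 1 := by
  have hd' : (0:ℝ) < (d:ℝ) := by exact_mod_cast hd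
  have hcard : ((Finset.Ico x (x + y)).filter (fun a => d ∣ a)).card ≤
      (Finset.Ico ⌈(x:ℝ) / d⌉₊ ⌈((x:ℝ) + y) / d⌉₊).card := by
    apply Finset.card_le_card_of_injOn (fun a => a / d)
    · intro a ha
      simp only [Finset.mem_coe, Finset.mem_filter, Finset.mem_Ico] at ha
      obtain ⟨⟨hax, haX⟩, k, rfl⟩ := ha
      simp only [Finset.mem_coe, Finset.mem_Ico]
      rw [Nat.mul_div_cancel_left k (by omega : 0 < d)]
      constructor
      · rw [Nat.ceil_le, div_le_iff₀ hd']
        calc (x:ℝ) ≤ ((d * k : ℕ):ℝ) := by exact_mod_cast hax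
        _ = (k:ℝ) * d := by push_cast; ring
      · rw [Nat.lt_ceil, lt_div_iff₀ hd']
        calc (k:ℝ) * d = ((d * k : ℕ):ℝ) := by push_cast; ring
        _ < (x:ℝ) + y := by exact_mod_cast haX
    · intro b₁ h₁ b₂ h₂ he
      simp only [Finset.mem_coe, Finset.mem_filter] at h₁ h₂
      obtain ⟨-, k₁, rfl⟩ := h₁
      obtain ⟨-, k₂, rfl⟩ := h₂
      simp only [Nat.mul_div_cancel_left _ (by omega : 0 < d)] at he
      rw [he]
  calc (((Finset.Ico x (x + y)).filter (fun a => d ∣ a)).card : ℝ)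
      ≤ ((Finset.Ico ⌈(x:ℝ) / d⌉₊ ⌈((x:ℝ) + y) / d⌉₊).card : ℝ) := by exact_mod_cast hcard
  _ ≤ (y:ℝ) / d + 1 := by
      rw [Nat.card_Ico]
      set cv := ⌈((x:ℝ) + y) / d⌉₊
      set fu := ⌈(x:ℝ) / d⌉₊
      have h1 : (cv:ℝ) < ((x:ℝ) + y) / d + 1 := Nat.ceil_lt_add_one (by positivity)
      have h2 : (x:ℝ) / d ≤ (fu:ℝ) := Nat.le_ceil _
      by_cases h : cv ≤ fu
      · have : cv - fu = 0 := by omega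
        rw [this]
        have : (0:ℝ) ≤ (y:ℝ)/d := by positivity
        simp
        linarith
      · push_neg at h
        have hc : ((cv - fu : ℕ) : ℝ) = (cv:ℝ) - fu := by
          rw [Nat.cast_sub (by omega : fu ≤ cv)]
        rw [hc]
        have : ((x:ℝ) + y)/d = (x:ℝ)/d + (y:ℝ)/d := by ring
        linarith

lemma sieve_a (hm : 1 ≤ m) {a : ℕ} (ha : 1 ≤ a) :
    (V n m a).card ≤ (W n m a).card +
      ∑ d ∈ (Finset.Ioc 1 a).filter (fun d => d ∣ a),
        ((V n m a).filter (fun b => d ∣ b)).card := by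
  have hsplit := Finset.card_filter_add_card_filter_not
    (s := V n m a) (p := fun b => Nat.Coprime a b)
  have hsub : (V n m a).filter (fun b => ¬ Nat.Coprime a b) ⊆
      ((Finset.Ioc 1 a).filter (fun d => d ∣ a)).biUnion
        (fun d => (V n m a).filter (fun b => d ∣ b)) := by
    intro b hb
    simp only [Finset.mem_filter] at hb
    obtain ⟨hbV, hbnc⟩ := hb
    have hg1 : 0 < Nat.gcd a b := Nat.gcd_pos_of_pos_left b (by omega)
    have hga : Nat.gcd a b ∣ a := Nat.gcd_dvd_left a b
    have hgb : Nat.gcd a b ∣ b := Nat.gcd_dvd_right a b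
    have hgne : Nat.gcd a b ≠ 1 := hbnc
    have hgle : Nat.gcd a b ≤ a := Nat.le_of_dvd (by omega) hga
    rw [Finset.mem_biUnion]
    exact ⟨Nat.gcd a b, by simp [Finset.mem_filter, Finset.mem_Ioc, hga, hgle]; omega,
      by simp [Finset.mem_filter, hbV, hgb]⟩
  have h2 : ((V n m a).filter (fun b => ¬ Nat.Coprime a b)).card ≤
      ∑ d ∈ (Finset.Ioc 1 a).filter (fun d => d ∣ a),
        ((V n m a).filter (fun b => d ∣ b)).card :=
    le_trans (Finset.card_le_card hsub) (Finset.card_biUnion_le)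
  unfold W
  omega

lemma sum_inv_sq_le (X : ℕ) : ∑ d ∈ Finset.Ioc 1 X, (((d:ℝ))^2)⁻¹ ≤ 3/4 := by
  rcases le_or_gt X 1 with h | h
  · rw [Finset.Ioc_eq_empty (by omega)]
    norm_num
  · have key : ∀ (Y : ℕ), 2 ≤ Y → ∑ d ∈ Finset.Ioc 1 Y, (((d:ℝ))^2)⁻¹ ≤ 3/4 - (Y:ℝ)⁻¹ := by
      intro Y hY
      induction Y, hY using Nat.le_induction with
      | base =>
        have : Finset.Ioc 1 2 = {2} := rfl
        rw [this]
        norm_num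
      | succ Y hY ih =>
        rw [Finset.sum_Ioc_succ_top (by omega : 1 ≤ Y)]
        have hY0 : (0:ℝ) < (Y:ℝ) := by positivity
        have hY1 : (0:ℝ) < (Y:ℝ) + 1 := by positivity
        have h1 : (((Y:ℝ)+1)^2)⁻¹ ≤ (Y:ℝ)⁻¹ - ((Y:ℝ)+1)⁻¹ := by
          rw [show (Y:ℝ)⁻¹ - ((Y:ℝ)+1)⁻¹ = ((Y:ℝ)*((Y:ℝ)+1))⁻¹ by
            field_simp; ring]
          apply inv_anti₀ (by positivity)
          nlinarith
        push_cast
        linarith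
    calc ∑ d ∈ Finset.Ioc 1 X, (((d:ℝ))^2)⁻¹ ≤ 3/4 - (X:ℝ)⁻¹ := key X (by omega)
    _ ≤ 3/4 := by
        have : (0:ℝ) < (X:ℝ)⁻¹ := by positivity
        linarith

lemma sum_inv_le_log (X : ℕ) (hX : 1 ≤ X) :
    ∑ d ∈ Finset.Ioc 1 X, ((d:ℝ))⁻¹ ≤ Real.log X := by
  induction X, hX using Nat.le_induction with
  | base => simp
  | succ X hX ih =>
    rw [Finset.sum_Ioc_succ_top (by omega : 1 ≤ X)]
    have hX0 : (0:ℝ) < (X:ℝ) := by positivity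
    have hX1 : (0:ℝ) < (X:ℝ) + 1 := by positivity
    have hstep : ((X:ℝ)+1)⁻¹ ≤ Real.log ((X:ℝ)+1) - Real.log (X:ℝ) := by
      rw [← Real.log_div (by positivity) (by positivity)]
      rw [Real.le_log_iff_exp_le (by positivity)]
      have hy : ((X:ℝ)+1)⁻¹ < 1 := by
        rw [inv_lt_one_iff₀]; right; linarith
      have h2 := Real.add_one_le_exp (-(((X:ℝ)+1)⁻¹))
      have h3 : (0:ℝ) < 1 - ((X:ℝ)+1)⁻¹ := by linarith
      have h4 : Real.exp (((X:ℝ)+1)⁻¹) ≤ (1 - ((X:ℝ)+1)⁻¹)⁻¹ := by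
        have h5 : (1:ℝ) - ((X:ℝ)+1)⁻¹ ≤ Real.exp (-(((X:ℝ)+1)⁻¹)) := by linarith
        have h6 := inv_anti₀ h3 h5
        rwa [← Real.exp_neg, neg_neg] at h6
      calc Real.exp (((X:ℝ)+1)⁻¹) ≤ (1 - ((X:ℝ)+1)⁻¹)⁻¹ := h4
      _ = ((X:ℝ)+1) / (X:ℝ) := by
          rw [show (1:ℝ) - ((X:ℝ)+1)⁻¹ = (X:ℝ)/((X:ℝ)+1) by field_simp; ring]
          rw [inv_div]
    push_cast
    linarith

lemma bernoulli_upper (k : ℕ) (δ : ℝ) (h0 : 0 ≤ δ) (h1 : 2*k*δ ≤ 1) :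
    (1+δ)^k ≤ 1 + 2*k*δ := by
  induction k with
  | zero => norm_num
  | succ k ih =>
    have hk : 2*(k:ℝ)*δ ≤ 1 := by
      have : (k:ℝ) ≤ (k:ℝ) + 1 := by linarith
      push_cast at h1
      nlinarith
    have ih' := ih hk
    have hδk : (0:ℝ) ≤ 2*(k:ℝ)*δ := by positivity
    push_cast
    calc (1+δ)^(k+1) = (1+δ)^k * (1+δ) := by ring
    _ ≤ (1 + 2*(k:ℝ)*δ) * (1+δ) := by nlinarith
    _ ≤ 1 + 2*((k:ℝ)+1)*δ := by nlinarith

lemma block (hn : 1 ≤ n) (hm : 1 ≤ m) (x y : ℕ) (hy : 1 ≤ y) (hx : 2^(n+3) * y ≤ x) :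
    (1 - cst m) / 16 * y * vr n m (x:ℝ) -
      (5 * ((x + y : ℕ):ℝ) + 2 * vr n m ((x + y : ℕ):ℝ)) * (1 + Real.log ((x + y : ℕ):ℝ))
    ≤ ∑ a ∈ Finset.Ico x (x+y), ((W n m a).card : ℝ) := by
  have h2n : (16:ℕ) ≤ 2^(n+3) := by
    calc (16:ℕ) = 2^4 := by norm_num
    _ ≤ 2^(n+3) := Nat.pow_le_pow_right (by omega) (by omega)
  have hx16 : 16 ≤ x := by
    have := Nat.mul_le_mul h2n hy
    omega
  set X := x + y with hX
  have hX2 : 2 ≤ X := by omega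
  have hXr1 : (1:ℝ) ≤ ((X:ℕ):ℝ) := by exact_mod_cast (by omega : 1 ≤ X)
  have hXrpos : (0:ℝ) < ((X:ℕ):ℝ) := by positivity
  have hL0 : 0 ≤ Real.log ((X:ℕ):ℝ) := Real.log_nonneg hXr1
  set L := Real.log ((X:ℕ):ℝ) with hL
  have hc0 := cst_pos m
  have hc1 := cst_lt_one (m := m) hm
  set c := cst m with hcc
  have hvx0 : 0 ≤ vr n m (x:ℝ) := vr_nonneg (by positivity)
  have hvX0 : 0 ≤ vr n m ((X:ℕ):ℝ) := vr_nonneg (by positivity)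
  have hy0 : (0:ℝ) ≤ (y:ℝ) := by positivity
  set p := (1 - c) * vr n m (x:ℝ) with hp
  set q := (1 - c) * vr n m ((X:ℕ):ℝ) with hq
  have hp0 : 0 ≤ p := by rw [hp]; nlinarith
  have hq0 : 0 ≤ q := by rw [hq]; nlinarith
  -- nat-level sieve
  have h_nat : ∑ a ∈ Finset.Ico x X, (V n m a).card ≤
      (∑ a ∈ Finset.Ico x X, (W n m a).card) +
      ∑ d ∈ Finset.Ioc 1 X, ∑ a ∈ (Finset.Ico x X).filter (fun a => d ∣ a),
        ((V n m a).filter (fun b => d ∣ b)).card := by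
    have h1 : ∑ a ∈ Finset.Ico x X, (V n m a).card ≤
        ∑ a ∈ Finset.Ico x X, ((W n m a).card +
          ∑ d ∈ (Finset.Ioc 1 a).filter (fun d => d ∣ a),
            ((V n m a).filter (fun b => d ∣ b)).card) := by
      apply Finset.sum_le_sum
      intro a ha
      have ha1 : 1 ≤ a := by
        have := (Finset.mem_Ico.1 ha).1; omega
      exact sieve_a hm ha1
    rw [Finset.sum_add_distrib] at h1
    refine h1.trans (Nat.add_le_add_left ?_ _)
    have h2 : ∀ a ∈ Finset.Ico x X,
        ∑ d ∈ (Finset.Ioc 1 a).filter (fun d => d ∣ a),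
            ((V n m a).filter (fun b => d ∣ b)).card ≤
        ∑ d ∈ (Finset.Ioc 1 X).filter (fun d => d ∣ a),
            ((V n m a).filter (fun b => d ∣ b)).card := by
      intro a ha
      apply Finset.sum_le_sum_of_subset
      apply Finset.filter_subset_filter
      apply Finset.Ioc_subset_Ioc_right
      have := (Finset.mem_Ico.1 ha).2; omega
    refine (Finset.sum_le_sum h2).trans ?_
    apply le_of_eq
    simp only [Finset.sum_filter]
    exact Finset.sum_comm
  -- real bound on the double sum
  have h_ds : ∑ d ∈ Finset.Ioc 1 X, ∑ a ∈ (Finset.Ico x X).filter (fun a => d ∣ a),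
        ((((V n m a).filter (fun b => d ∣ b)).card : ℕ) : ℝ) ≤
      (3/4) * ((y:ℝ) * q) + ((y:ℝ) + q) * L + (X:ℝ) := by
    have hbound : ∀ d ∈ Finset.Ioc 1 X,
        (∑ a ∈ (Finset.Ico x X).filter (fun a => d ∣ a),
          ((((V n m a).filter (fun b => d ∣ b)).card : ℕ) : ℝ)) ≤
        ((y:ℝ)/d + 1) * (q/d + 1) := by
      intro d hd
      obtain ⟨hd1, hdX⟩ := Finset.mem_Ioc.1 hd
      have hd0 : (0:ℝ) < (d:ℝ) := by exact_mod_cast (by omega : 0 < d)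
      have hq1 : (0:ℝ) ≤ q/d + 1 := by positivity
      have hM : ∀ a ∈ (Finset.Ico x X).filter (fun a => d ∣ a),
          ((((V n m a).filter (fun b => d ∣ b)).card : ℕ) : ℝ) ≤ q/d + 1 := by
        intro a ha
        simp only [Finset.mem_filter, Finset.mem_Ico] at ha
        have ha1 : 1 ≤ a := by omega
        refine (cardV_dvd hm ha1 (by omega : 1 ≤ d)).trans ?_
        have hmono : vr n m (a:ℝ) ≤ vr n m ((X:ℕ):ℝ) := by
          apply vr_mono n m (by positivity)
          exact_mod_cast (by omega : a ≤ X)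
        have h7 : (1 - c) * vr n m (a:ℝ) ≤ q := by rw [hq]; nlinarith
        gcongr
      calc (∑ a ∈ (Finset.Ico x X).filter (fun a => d ∣ a),
          ((((V n m a).filter (fun b => d ∣ b)).card : ℕ) : ℝ))
          ≤ ((Finset.Ico x X).filter (fun a => d ∣ a)).card • (q/d + 1) :=
            Finset.sum_le_card_nsmul _ _ _ hM
      _ = (((Finset.Ico x X).filter (fun a => d ∣ a)).card : ℝ) * (q/d + 1) := by
            rw [nsmul_eq_mul]
      _ ≤ ((y:ℝ)/d + 1) * (q/d + 1) := by
            apply mul_le_mul_of_nonneg_right _ hq1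
            exact count_dvd_Ico (by omega : 1 ≤ d)
    refine (Finset.sum_le_sum hbound).trans ?_
    have hexp : ∀ d ∈ Finset.Ioc 1 X,
        ((y:ℝ)/d + 1) * (q/d + 1) =
          (y:ℝ)*q*(((d:ℝ))^2)⁻¹ + ((y:ℝ)+q)*((d:ℝ))⁻¹ + 1 := by
      intro d hd
      obtain ⟨hd1, -⟩ := Finset.mem_Ioc.1 hd
      have hdne : (d:ℝ) ≠ 0 := by
        have : (0:ℝ) < (d:ℝ) := by exact_mod_cast (by omega : 0 < d)
        linarith
      field_simp
      ring
    rw [Finset.sum_congr rfl hexp, Finset.sum_add_distrib, Finset.sum_add_distrib,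
      ← Finset.mul_sum, ← Finset.mul_sum, Finset.sum_const, Nat.card_Ioc,
      nsmul_eq_mul, mul_one]
    have hs1 := sum_inv_sq_le X
    have hs2 := sum_inv_le_log X (by omega)
    have hcast : ((X - 1 : ℕ):ℝ) ≤ (X:ℝ) := by
      have : (X - 1 : ℕ) ≤ X := Nat.sub_le X 1
      exact_mod_cast this
    have hyq : (0:ℝ) ≤ (y:ℝ)*q := by positivity
    have hyq2 : (0:ℝ) ≤ (y:ℝ)+q := by positivity
    have t1 := mul_le_mul_of_nonneg_left hs1 hyq
    have t2 := mul_le_mul_of_nonneg_left hs2 hyq2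
    rw [hL]
    linarith
  -- lower bound on sum of |V a|
  have h_low : (y:ℝ) * (p - 1) ≤ ∑ a ∈ Finset.Ico x X, ((V n m a).card : ℝ) := by
    have hM : ∀ a ∈ Finset.Ico x X, p - 1 ≤ ((V n m a).card : ℝ) := by
      intro a ha
      obtain ⟨hax, haX⟩ := Finset.mem_Ico.1 ha
      have ha1 : 1 ≤ a := by omega
      have hcl := cardV_lower (n := n) hm ha1
      have hmono : vr n m (x:ℝ) ≤ vr n m (a:ℝ) :=
        vr_mono n m (by positivity) (by exact_mod_cast hax)
      rw [hp]; nlinarith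
    have hs := Finset.card_nsmul_le_sum (Finset.Ico x X) _ (p - 1) hM
    rw [Nat.card_Ico] at hs
    have hXx : X - x = y := by omega
    rw [hXx, nsmul_eq_mul] at hs
    exact hs
  -- vr X vs vr x
  have h_vrX : vr n m ((X:ℕ):ℝ) ≤ (5/4) * vr n m (x:ℝ) := by
    set δ : ℝ := ((2:ℝ)^(n+3))⁻¹ with hδ
    have hδ0 : (0:ℝ) ≤ δ := by positivity
    have h2pos : (0:ℝ) < 2^(n+3) := by positivity
    have hyx : (y:ℝ) ≤ (x:ℝ) * δ := by
      have hcast : ((2:ℝ)^(n+3)) * y ≤ (x:ℝ) := by exact_mod_cast hx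
      rw [hδ, ← div_eq_mul_inv, le_div_iff₀ h2pos]
      linarith
    have hXx : ((X:ℕ):ℝ) ≤ (x:ℝ) * (1 + δ) := by
      have : ((X:ℕ):ℝ) = (x:ℝ) + y := by rw [hX]; push_cast; ring
      rw [this]; nlinarith
    have h1 : vr n m ((X:ℕ):ℝ) ≤ vr n m ((x:ℝ)*(1+δ)) :=
      vr_mono n m (by positivity) hXx
    have h2 : vr n m ((x:ℝ)*(1+δ)) = vr n m (x:ℝ) * (((1+δ)^n : ℝ) ^ ((m:ℝ)⁻¹)) := by
      unfold vr
      rw [mul_pow, Real.mul_rpow (by positivity) (by positivity)]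
    have hminv : ((m:ℝ))⁻¹ ≤ 1 := by
      have h1m : (1:ℝ) ≤ (m:ℝ) := by exact_mod_cast hm
      rw [inv_le_one_iff₀]; right; exact h1m
    have h3 : (((1+δ)^n : ℝ) ^ ((m:ℝ)⁻¹)) ≤ (1+δ)^n := by
      have hb : (1:ℝ) ≤ (1+δ)^n := one_le_pow₀ (by linarith)
      calc (((1+δ)^n : ℝ) ^ ((m:ℝ)⁻¹)) ≤ (((1+δ)^n : ℝ) ^ ((1:ℝ))) :=
        Real.rpow_le_rpow_of_exponent_le hb hminv
      _ = (1+δ)^n := Real.rpow_one _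
    have h5 : 2*(n:ℝ)*δ ≤ 1/4 := by
      have hn2 : (n:ℝ) ≤ 2^n := by exact_mod_cast (Nat.lt_two_pow_self (n := n)).le
      have he : (2:ℝ)^(n+3) = 2^n * 8 := by rw [pow_add]; norm_num
      have h2n0 : (0:ℝ) < (2:ℝ)^n := by positivity
      rw [hδ, he, ← div_eq_mul_inv, div_le_div_iff₀ (by positivity) (by norm_num)]
      nlinarith
    have h4 : ((1:ℝ)+δ)^n ≤ 1 + 2*n*δ := bernoulli_upper n δ hδ0 (by linarith)
    have hfin : (((1+δ)^n : ℝ) ^ ((m:ℝ)⁻¹)) ≤ 5/4 := by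
      calc (((1+δ)^n : ℝ) ^ ((m:ℝ)⁻¹)) ≤ (1+δ)^n := h3
      _ ≤ 1 + 2*n*δ := h4
      _ ≤ 5/4 := by linarith
    calc vr n m ((X:ℕ):ℝ) ≤ vr n m ((x:ℝ)*(1+δ)) := h1
    _ = vr n m (x:ℝ) * (((1+δ)^n : ℝ) ^ ((m:ℝ)⁻¹)) := h2
    _ ≤ vr n m (x:ℝ) * (5/4) := by
        apply mul_le_mul_of_nonneg_left hfin hvx0
    _ = (5/4) * vr n m (x:ℝ) := by ring
  -- combine everything
  have hchain : (∑ a ∈ Finset.Ico x X, ((V n m a).card : ℝ)) ≤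
      (∑ a ∈ Finset.Ico x X, ((W n m a).card : ℝ)) +
      ((3/4) * ((y:ℝ) * q) + ((y:ℝ) + q) * L + (X:ℝ)) := by
    have hcastnat : (∑ a ∈ Finset.Ico x X, ((V n m a).card : ℝ)) ≤
        (∑ a ∈ Finset.Ico x X, ((W n m a).card : ℝ)) +
        ∑ d ∈ Finset.Ioc 1 X, ∑ a ∈ (Finset.Ico x X).filter (fun a => d ∣ a),
          ((((V n m a).filter (fun b => d ∣ b)).card : ℕ) : ℝ) := by
      exact_mod_cast h_nat
    linarith [h_ds]
  have hq54 : q ≤ (5/4) * p := by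
    rw [hq, hp]; nlinarith
  have h34 : (3/4) * ((y:ℝ)*q) ≤ (15/16)*((y:ℝ)*p) := by nlinarith
  have h_low2 : (y:ℝ)*p - (y:ℝ) ≤ ∑ a ∈ Finset.Ico x X, ((V n m a).card : ℝ) := by
    nlinarith [h_low]
  have hyX : (y:ℝ) ≤ ((X:ℕ):ℝ) := by exact_mod_cast (by omega : y ≤ X)
  have hqv : q ≤ vr n m ((X:ℕ):ℝ) := by rw [hq]; nlinarith
  have herr : (y:ℝ) + ((y:ℝ)+q)*L + ((X:ℕ):ℝ) ≤
      (5 * ((X:ℕ):ℝ) + 2 * vr n m ((X:ℕ):ℝ)) * (1 + L) := by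
    have hm1 : ((y:ℝ)+q)*L ≤ (((X:ℕ):ℝ) + vr n m ((X:ℕ):ℝ))*L :=
      mul_le_mul_of_nonneg_right (by linarith) hL0
    nlinarith [mul_nonneg hXrpos.le hL0, mul_nonneg hvX0 hL0]
  have hgoal_eq : (1-c)/16 * (y:ℝ) * vr n m (x:ℝ) = (1/16)*((y:ℝ)*p) := by
    rw [hp]; ring
  rw [hgoal_eq]
  linarith [hchain, h_low2, h34, herr]

lemma sum_blocks (f : ℕ → ℕ) (x y : ℕ) : ∀ K : ℕ,
    ∑ a ∈ Finset.Ico x (x + K*y), f a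
      = ∑ j ∈ Finset.range K, ∑ a ∈ Finset.Ico (x + j*y) (x + j*y + y), f a := by
  intro K
  induction K with
  | zero => simp
  | succ K ih =>
    rw [Finset.sum_range_succ, ← ih]
    have h1 : x ≤ x + K*y := by omega
    have h2 : x + K*y ≤ x + K*y + y := by omega
    have h3 : x + (K+1)*y = x + K*y + y := by ring
    rw [h3]
    exact (Finset.sum_Ico_consecutive f h1 h2).symm

def F (n m t : ℕ) : Finset (ℕ × ℕ) :=
  (Finset.Ico (2^t) (2^(t+1))).biUnion (fun a => (W n m a).image (fun b => (a, b)))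

lemma card_F (t : ℕ) :
    (F n m t).card = ∑ a ∈ Finset.Ico (2^t) (2^(t+1)), (W n m a).card := by
  unfold F
  rw [Finset.card_biUnion]
  · apply Finset.sum_congr rfl
    intro a _
    apply Finset.card_image_of_injective
    intro b₁ b₂ h
    simpa using h
  · intro i _ j _ hij
    rw [Function.onFun, Finset.disjoint_left]
    rintro ⟨pa, pb⟩ hp1 hp2
    simp only [Finset.mem_image, Prod.mk.injEq] at hp1 hp2
    obtain ⟨b₁, -, h₁, -⟩ := hp1
    obtain ⟨b₂, -, h₂, -⟩ := hp2
    exact hij (h₁.trans h₂.symm)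

lemma set_eq (hn : 1 ≤ n) (hm : 1 ≤ m) (t : ℕ) :
    {ab : ℕ × ℕ | 1 ≤ ab.1 ∧ 1 ≤ ab.2 ∧ Nat.Coprime ab.1 ab.2 ∧
      (1 : ℝ) / 2 < (ab.1 : ℝ) ^ n / (ab.2 : ℝ) ^ m ∧
      (ab.1 : ℝ) ^ n / (ab.2 : ℝ) ^ m < 2 ∧
      ab.2 ^ m < ab.1 ^ n ∧ 2 ^ t ≤ ab.1 ∧ ab.1 < 2 ^ (t + 1)} = ↑(F n m t) := by
  ext ⟨a, b⟩
  simp only [Set.mem_setOf_eq, Finset.coe_biUnion, F, Set.mem_iUnion, Finset.mem_coe,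
    Finset.mem_image, Finset.mem_Ico, Finset.mem_biUnion, Prod.mk.injEq]
  constructor
  · rintro ⟨ha1, hb1, hcop, hr1, hr2, hnat, hta, htb⟩
    refine ⟨a, ⟨hta, htb⟩, b, ?_, rfl, rfl⟩
    rw [W, Finset.mem_filter]
    refine ⟨?_, hcop⟩
    rw [V, Finset.mem_filter, Finset.mem_range]
    have hbm : (0:ℝ) < (b:ℝ)^m := by positivity
    have h2 : ((a:ℝ))^n < 2*(b:ℝ)^m := by
      rw [div_lt_iff₀ hbm] at hr2; linarith
    have h2n : a^n < 2*b^m := by exact_mod_cast h2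
    refine ⟨?_, h2n, hnat⟩
    have := Nat.le_self_pow (by omega : m ≠ 0) b
    omega
  · rintro ⟨a', ⟨hta, htb⟩, b', hbW, ha', hb'⟩
    subst ha'; subst hb'
    rw [W, Finset.mem_filter] at hbW
    obtain ⟨hbV, hcop⟩ := hbW
    rw [V, Finset.mem_filter, Finset.mem_range] at hbV
    obtain ⟨-, h2, h3⟩ := hbV
    have ha1 : 1 ≤ a' := le_trans Nat.one_le_two_pow hta
    have hb1 : 1 ≤ b' := by
      rcases Nat.eq_zero_or_pos b' with rfl | h0
      · rw [Nat.zero_pow (by omega : 0 < m)] at h2; omega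
      · exact h0
    have hbm : (0:ℝ) < (b':ℝ)^m := by positivity
    refine ⟨ha1, hb1, hcop, ?_, ?_, h3, hta, htb⟩
    · have h3r : ((b':ℝ))^m < (a':ℝ)^n := by exact_mod_cast h3
      rw [lt_div_iff₀ hbm]; nlinarith
    · have h2r : ((a':ℝ))^n < 2*(b':ℝ)^m := by exact_mod_cast h2
      rw [div_lt_iff₀ hbm]; linarith

lemma exp_ge_sq {x : ℝ} (hx : 0 ≤ x) : x^2 ≤ Real.exp x := by
  have h1 : x ≤ Real.exp (x/2) := by
    have h2 := Real.add_one_le_exp (x/4)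
    have h3 : (1 + x/4)^2 ≤ (Real.exp (x/4))^2 := by nlinarith [Real.exp_pos (x/4)]
    have h4 : (Real.exp (x/4))^2 = Real.exp (x/2) := by
      rw [sq, ← Real.exp_add]; ring_nf
    nlinarith [sq_nonneg (1 - x/4)]
  have h5 : x^2 ≤ (Real.exp (x/2))^2 := by nlinarith [Real.exp_pos (x/2)]
  have h6 : (Real.exp (x/2))^2 = Real.exp x := by
    rw [sq, ← Real.exp_add]; ring_nf
  linarith

lemma poly_le (hm : 1 ≤ m) {ε : ℝ} (hε : 0 < ε) :
    ∃ T : ℕ, ∀ t : ℕ, T ≤ t → (t:ℝ) + 2 ≤ ε * (2:ℝ) ^ ((t:ℝ)/(m:ℝ)) := by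
  refine ⟨⌈8*(m:ℝ)^2/ε⌉₊ + 2, fun t ht => ?_⟩
  have hm0 : (0:ℝ) < (m:ℝ) := by
    have : 0 < m := hm
    exact_mod_cast this
  have ht2 : (2:ℝ) ≤ (t:ℝ) := by exact_mod_cast (by omega : 2 ≤ t)
  have htr : 8*(m:ℝ)^2/ε ≤ (t:ℝ) := by
    calc 8*(m:ℝ)^2/ε ≤ (⌈8*(m:ℝ)^2/ε⌉₊ : ℝ) := Nat.le_ceil _
    _ ≤ (t:ℝ) := by exact_mod_cast (by omega : ⌈8*(m:ℝ)^2/ε⌉₊ ≤ t)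
  have htr' : 8*(m:ℝ)^2 ≤ ε * t := by
    rw [div_le_iff₀ hε] at htr; linarith [htr]
  have hlog : (1/2:ℝ) ≤ Real.log 2 := by
    have := Real.log_two_gt_d9; linarith
  have hrw : (2:ℝ) ^ ((t:ℝ)/(m:ℝ)) = Real.exp (Real.log 2 * ((t:ℝ)/(m:ℝ))) :=
    Real.rpow_def_of_pos two_pos _
  have hu : (0:ℝ) ≤ (t:ℝ)/(m:ℝ) := by positivity
  have hsq := exp_ge_sq (x := Real.log 2 * ((t:ℝ)/(m:ℝ))) (by positivity)
  have h1 : (t:ℝ)/(2*(m:ℝ)) ≤ Real.log 2 * ((t:ℝ)/(m:ℝ)) := by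
    have he : (t:ℝ)/(2*(m:ℝ)) = (1/2)*((t:ℝ)/(m:ℝ)) := by ring
    rw [he]
    exact mul_le_mul_of_nonneg_right hlog hu
  have h2 : ((t:ℝ)/(2*(m:ℝ)))^2 ≤ (Real.log 2 * ((t:ℝ)/(m:ℝ)))^2 :=
    pow_le_pow_left₀ (by positivity) h1 2
  have h3 : ((t:ℝ)/(2*(m:ℝ)))^2 = (t:ℝ)^2/(4*(m:ℝ)^2) := by ring
  have h4 : (t:ℝ) + 2 ≤ ε * ((t:ℝ)^2/(4*(m:ℝ)^2)) := by
    rw [mul_div_assoc']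
    rw [le_div_iff₀ (by positivity : (0:ℝ) < 4*(m:ℝ)^2)]
    nlinarith [mul_nonneg (sub_nonneg.2 htr') (by positivity : (0:ℝ) ≤ (t:ℝ)),
      mul_nonneg (by positivity : (0:ℝ) ≤ (m:ℝ)^2) (sub_nonneg.2 ht2)]
  have h5 : ε * ((t:ℝ)^2/(4*(m:ℝ)^2)) ≤ ε * (2:ℝ) ^ ((t:ℝ)/(m:ℝ)) := by
    apply mul_le_mul_of_nonneg_left _ hε.le
    rw [hrw]
    calc (t:ℝ)^2/(4*(m:ℝ)^2) = ((t:ℝ)/(2*(m:ℝ)))^2 := by ring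
    _ ≤ (Real.log 2 * ((t:ℝ)/(m:ℝ)))^2 := h2
    _ ≤ Real.exp (Real.log 2 * ((t:ℝ)/(m:ℝ))) := hsq
  linarith

lemma pow_vr_eq (hm : 1 ≤ m) (t : ℕ) :
    (((2:ℕ)^t : ℕ):ℝ) * vr n m (((2:ℕ)^t : ℕ):ℝ) = (2:ℝ) ^ (((n:ℝ)/(m:ℝ) + 1)*(t:ℝ)) := by
  have hc : (((2:ℕ)^t : ℕ):ℝ) = (2:ℝ)^(t:ℝ) := by
    push_cast
    rw [Real.rpow_natCast]
  rw [hc]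
  unfold vr
  rw [← Real.rpow_natCast ((2:ℝ)^((t:ℝ))) n, ← Real.rpow_mul (by norm_num),
    ← Real.rpow_mul (by norm_num),
    ← Real.rpow_add (by norm_num : (0:ℝ) < 2)]
  congr 1
  field_simp
  ring

lemma vr_double (hm : 1 ≤ m) {r : ℝ} (hr : 0 ≤ r) :
    vr n m (2*r) ≤ 2^n * vr n m r := by
  unfold vr
  rw [mul_pow, Real.mul_rpow (by positivity) (by positivity)]
  have hb : (1:ℝ) ≤ ((2:ℝ)^n) := one_le_pow₀ (by norm_num)
  have h3 : (((2:ℝ)^n) ^ ((m:ℝ)⁻¹)) ≤ (2:ℝ)^n := by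
    have hminv : ((m:ℝ))⁻¹ ≤ 1 := by
      have h1m : (1:ℝ) ≤ (m:ℝ) := by exact_mod_cast hm
      rw [inv_le_one_iff₀]; right; exact h1m
    calc (((2:ℝ)^n) ^ ((m:ℝ)⁻¹)) ≤ (((2:ℝ)^n) ^ ((1:ℝ))) :=
      Real.rpow_le_rpow_of_exponent_le hb hminv
    _ = (2:ℝ)^n := Real.rpow_one _
  apply mul_le_mul_of_nonneg_right h3
  positivity

lemma twopow_le (hm : 1 ≤ m) (hn : 1 ≤ n) (t : ℕ) :
    (2:ℝ) ^ ((t:ℝ)/(m:ℝ)) ≤ (2:ℝ)^t ∧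
    (2:ℝ) ^ ((t:ℝ)/(m:ℝ)) ≤ vr n m (((2:ℕ)^t : ℕ):ℝ) := by
  have hm1 : (1:ℝ) ≤ (m:ℝ) := by exact_mod_cast hm
  have hn1 : (1:ℝ) ≤ (n:ℝ) := by exact_mod_cast hn
  have hm0 : (0:ℝ) < (m:ℝ) := by linarith
  have ht0 : (0:ℝ) ≤ (t:ℝ) := by positivity
  have hdiv : (t:ℝ)/(m:ℝ) ≤ (t:ℝ) := by
    rw [div_le_iff₀ hm0]; nlinarith
  constructor
  · calc (2:ℝ) ^ ((t:ℝ)/(m:ℝ)) ≤ (2:ℝ) ^ ((t:ℝ)) :=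
      Real.rpow_le_rpow_of_exponent_le (by norm_num) hdiv
    _ = (2:ℝ)^t := Real.rpow_natCast 2 t
  · have hc : (((2:ℕ)^t : ℕ):ℝ) = (2:ℝ)^(t:ℝ) := by
      push_cast; rw [Real.rpow_natCast]
    rw [hc]
    unfold vr
    rw [← Real.rpow_natCast ((2:ℝ)^((t:ℝ))) n, ← Real.rpow_mul (by norm_num),
      ← Real.rpow_mul (by norm_num)]
    apply Real.rpow_le_rpow_of_exponent_le (by norm_num)
    rw [div_le_iff₀ hm0]
    have hxx : (t:ℝ) * ((n:ℝ) * (m:ℝ)⁻¹) * (m:ℝ) = (t:ℝ) * (n:ℝ) := by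
      field_simp
    rw [hxx]
    nlinarith

end Stmt8
set_option maxHeartbeats 4000000 in
theorem stmt8 (n m : ℕ) (hn : 1 ≤ n) (hm : 1 ≤ m) :
    ∃ c₁ c₂ : ℝ, 0 < c₁ ∧ 0 < c₂ ∧ ∃ T : ℕ, ∀ t : ℕ, T ≤ t →
      c₁ * 2 ^ (((n : ℝ) / m + 1) * t) ≤
        (Nat.card {ab : ℕ × ℕ | 1 ≤ ab.1 ∧ 1 ≤ ab.2 ∧ Nat.Coprime ab.1 ab.2 ∧
          (1 : ℝ) / 2 < (ab.1 : ℝ) ^ n / (ab.2 : ℝ) ^ m ∧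
          (ab.1 : ℝ) ^ n / (ab.2 : ℝ) ^ m < 2 ∧
          ab.2 ^ m < ab.1 ^ n ∧ 2 ^ t ≤ ab.1 ∧ ab.1 < 2 ^ (t + 1)} : ℝ) ∧
      (Nat.card {ab : ℕ × ℕ | 1 ≤ ab.1 ∧ 1 ≤ ab.2 ∧ Nat.Coprime ab.1 ab.2 ∧
          (1 : ℝ) / 2 < (ab.1 : ℝ) ^ n / (ab.2 : ℝ) ^ m ∧
          (ab.1 : ℝ) ^ n / (ab.2 : ℝ) ^ m < 2 ∧
          ab.2 ^ m < ab.1 ^ n ∧ 2 ^ t ≤ ab.1 ∧ ab.1 < 2 ^ (t + 1)} : ℝ) ≤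
        c₂ * 2 ^ (((n : ℝ) / m + 1) * t) := by
  classical
  have hc0 := Stmt8.cst_pos m
  have hc1 := Stmt8.cst_lt_one (m := m) hm
  set c := Stmt8.cst m with hc
  have hC0 : (0:ℝ) < (2:ℝ)^(2*n+8) := by positivity
  set ε' : ℝ := ((1 - c)/32) / (2 * (2:ℝ)^(2*n+8)) with hε'
  have hε'pos : 0 < ε' := by
    apply div_pos (by linarith) (by positivity)
  obtain ⟨T₀, hT₀⟩ := Stmt8.poly_le hm hε'pos
  refine ⟨(1-c)/32, (2:ℝ)^(n+1), by linarith, by positivity, T₀ + n + 3, ?_⟩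
  intro t ht
  have hcard : (Nat.card {ab : ℕ × ℕ | 1 ≤ ab.1 ∧ 1 ≤ ab.2 ∧ Nat.Coprime ab.1 ab.2 ∧
      (1 : ℝ) / 2 < (ab.1 : ℝ) ^ n / (ab.2 : ℝ) ^ m ∧
      (ab.1 : ℝ) ^ n / (ab.2 : ℝ) ^ m < 2 ∧
      ab.2 ^ m < ab.1 ^ n ∧ 2 ^ t ≤ ab.1 ∧ ab.1 < 2 ^ (t + 1)}) =
      ∑ a ∈ Finset.Ico (2^t) (2^(t+1)), (Stmt8.W n m a).card := by
    rw [Stmt8.set_eq hn hm t, Nat.card_coe_set_eq, Set.ncard_coe_finset, Stmt8.card_F]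
  rw [hcard]
  -- abbreviations
  set A : ℝ := (((2:ℕ)^t : ℕ) : ℝ) with hA
  set A2 : ℝ := (((2:ℕ)^(t+1) : ℕ) : ℝ) with hA2
  set B : ℝ := Stmt8.vr n m A with hB
  set B2 : ℝ := Stmt8.vr n m A2 with hB2
  have hA_eq : A = (2:ℝ)^t := by rw [hA]; push_cast; ring
  have hA1 : (1:ℝ) ≤ A := by rw [hA_eq]; exact one_le_pow₀ (by norm_num)
  have hA21 : (1:ℝ) ≤ A2 := by
    rw [hA2]; exact_mod_cast Nat.one_le_two_pow
  have hA2_eq : A2 = 2 * A := by rw [hA2, hA]; push_cast; ring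
  have hB0 : (1:ℝ) ≤ B := Stmt8.one_le_vr hm hA1
  have hB20 : (0:ℝ) ≤ B2 := Stmt8.vr_nonneg (by linarith)
  have hB2n : B2 ≤ 2^n * B := by
    rw [hB2, hA2_eq, hB]
    exact Stmt8.vr_double hm (by linarith)
  have hP : A * B = (2:ℝ) ^ (((n:ℝ)/(m:ℝ) + 1)*(t:ℝ)) := by
    rw [hB, hA]
    exact Stmt8.pow_vr_eq hm t
  have hPpos : (0:ℝ) < A * B := by nlinarith
  -- the grid
  set y : ℕ := 2^(t - (n+3)) with hy
  have hy1 : 1 ≤ y := Nat.one_le_two_pow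
  have hKy : 2^(n+3) * y = 2^t := by
    rw [hy, ← pow_add]
    congr 1
    omega
  have h2t1 : 2^(t+1) = 2^t + 2^(n+3)*y := by
    rw [hKy, pow_succ]
    omega
  have hsplit : ∑ a ∈ Finset.Ico (2^t) (2^(t+1)), (Stmt8.W n m a).card
      = ∑ j ∈ Finset.range (2^(n+3)),
          ∑ a ∈ Finset.Ico (2^t + j*y) (2^t + j*y + y), (Stmt8.W n m a).card := by
    rw [h2t1]
    exact Stmt8.sum_blocks _ _ _ _
  -- error term
  set L2 : ℝ := Real.log A2 with hL2
  have hL2nn : 0 ≤ L2 := Real.log_nonneg hA21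
  set Estar : ℝ := (5 * A2 + 2 * B2) * (1 + L2) with hEstar
  -- block lower bounds
  have hblockj : ∀ j ∈ Finset.range (2^(n+3)),
      (1-c)/16 * (y:ℝ) * B - Estar ≤
        ∑ a ∈ Finset.Ico (2^t + j*y) (2^t + j*y + y), ((Stmt8.W n m a).card : ℝ) := by
    intro j hj
    have hj' : j < 2^(n+3) := Finset.mem_range.1 hj
    have hxj : 2^(n+3) * y ≤ 2^t + j*y := by rw [hKy]; omega
    have hb := Stmt8.block hn hm (2^t + j*y) y hy1 hxj
    have hXle : (2^t + j*y) + y ≤ 2^(t+1) := by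
      rw [h2t1]
      have : (j+1) * y ≤ 2^(n+3) * y := Nat.mul_le_mul_right y (by omega)
      nlinarith
    have hXler : (((2^t + j*y + y : ℕ)) : ℝ) ≤ A2 := by
      rw [hA2]; exact_mod_cast hXle
    have hX1 : (1:ℝ) ≤ (((2^t + j*y + y : ℕ)) : ℝ) := by
      have : 1 ≤ 2^t + j*y + y := by have := Nat.one_le_two_pow (n := t); omega
      exact_mod_cast this
    have hvle : Stmt8.vr n m (((2^t + j*y + y : ℕ)) : ℝ) ≤ B2 := by
      rw [hB2]; exact Stmt8.vr_mono n m (by linarith) hXler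
    have hlogle : Real.log (((2^t + j*y + y : ℕ)) : ℝ) ≤ L2 := by
      rw [hL2]; exact Real.log_le_log (by linarith) hXler
    have hlognn : 0 ≤ Real.log (((2^t + j*y + y : ℕ)) : ℝ) := Real.log_nonneg hX1
    have hvnn : 0 ≤ Stmt8.vr n m (((2^t + j*y + y : ℕ)) : ℝ) :=
      Stmt8.vr_nonneg (by linarith)
    have hEb : (5 * (((2^t + j*y + y : ℕ)) : ℝ) +
        2 * Stmt8.vr n m (((2^t + j*y + y : ℕ)) : ℝ)) *
        (1 + Real.log (((2^t + j*y + y : ℕ)) : ℝ)) ≤ Estar := by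
      rw [hEstar]
      apply mul_le_mul (by linarith) (by linarith) (by linarith) (by nlinarith)
    have hmainj : (1-c)/16 * (y:ℝ) * B ≤
        (1-c)/16 * (y:ℝ) * Stmt8.vr n m (((2^t + j*y : ℕ)) : ℝ) := by
      have hmono : B ≤ Stmt8.vr n m (((2^t + j*y : ℕ)) : ℝ) := by
        rw [hB, hA]
        apply Stmt8.vr_mono n m (by positivity)
        exact_mod_cast (by omega : 2^t ≤ 2^t + j*y)
      have h9 : (0:ℝ) ≤ (1-c)/16 := by linarith
      have h10 : (0:ℝ) ≤ (1-c)/16 * (y:ℝ) := mul_nonneg h9 (by positivity)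
      nlinarith
    have heq : ((2^t + j*y + y : ℕ) : ℝ) = (((2^t + j*y) + y : ℕ) : ℝ) := by norm_num
    calc (1-c)/16 * (y:ℝ) * B - Estar
        ≤ (1-c)/16 * (y:ℝ) * Stmt8.vr n m (((2^t + j*y : ℕ)) : ℝ) -
          (5 * (((2^t + j*y + y : ℕ)) : ℝ) +
            2 * Stmt8.vr n m (((2^t + j*y + y : ℕ)) : ℝ)) *
            (1 + Real.log (((2^t + j*y + y : ℕ)) : ℝ)) := by linarith
    _ ≤ _ := hb
  -- sum the blocks
  have hsum_low : (2^(n+3) : ℝ) * ((1-c)/16 * (y:ℝ) * B - Estar) ≤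
      ∑ a ∈ Finset.Ico (2^t) (2^(t+1)), ((Stmt8.W n m a).card : ℝ) := by
    have hs := Finset.card_nsmul_le_sum (Finset.range (2^(n+3))) _ _ hblockj
    rw [Finset.card_range, nsmul_eq_mul] at hs
    have hcast2 : ∑ a ∈ Finset.Ico (2^t) (2^(t+1)), ((Stmt8.W n m a).card : ℝ)
        = ∑ j ∈ Finset.range (2^(n+3)),
            ∑ a ∈ Finset.Ico (2^t + j*y) (2^t + j*y + y), ((Stmt8.W n m a).card : ℝ) := by
      exact_mod_cast congrArg (Nat.cast : ℕ → ℝ) hsplit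
    rw [hcast2]
    exact_mod_cast hs
  -- main term identity
  have hmain_id : (2^(n+3) : ℝ) * ((1-c)/16 * (y:ℝ) * B) = (1-c)/16 * (A * B) := by
    have hq : ((2^(n+3) * y : ℕ) : ℝ) = A := by rw [hKy, hA]
    push_cast at hq
    calc (2^(n+3) : ℝ) * ((1-c)/16 * (y:ℝ) * B)
        = (1-c)/16 * (((2:ℝ)^(n+3) * (y:ℝ)) * B) := by ring
    _ = (1-c)/16 * (A * B) := by rw [hq]
  -- error bound
  have hterr : ((t:ℝ)) + 2 ≤ ε' * (2:ℝ) ^ ((t:ℝ)/(m:ℝ)) := hT₀ t (by omega)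
  obtain ⟨htp1, htp2⟩ := Stmt8.twopow_le hm hn t
  have htpA : (2:ℝ) ^ ((t:ℝ)/(m:ℝ)) ≤ A := by rw [hA_eq]; exact htp1
  have htpB : (2:ℝ) ^ ((t:ℝ)/(m:ℝ)) ≤ B := by rw [hB, hA]; exact htp2
  have hL2le : L2 ≤ (t:ℝ) + 1 := by
    rw [hL2, hA2]
    push_cast
    rw [Real.log_pow]
    push_cast
    have hl2 := Real.log_two_lt_d9
    have ht1 : (0:ℝ) ≤ (t:ℝ) + 1 := by positivity
    nlinarith [mul_nonneg ht1 (by linarith [Real.log_two_gt_d9] : (0:ℝ) ≤ 1 - Real.log 2)]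
  have hEstar_le : Estar ≤ (10 * A + 2^(n+1) * B) * ((t:ℝ) + 2) := by
    rw [hEstar]
    apply mul_le_mul
    · rw [hA2_eq]
      have : (2:ℝ)^(n+1) * B = 2 * (2^n * B) := by ring
      nlinarith
    · linarith
    · linarith
    · positivity
  have hKE : (2^(n+3) : ℝ) * Estar ≤ (1-c)/32 * (A * B) := by
    have h1 : (2^(n+3) : ℝ) * ((10 * A + 2^(n+1) * B) * ((t:ℝ) + 2)) ≤
        (2:ℝ)^(2*n+8) * ((A + B) * ((t:ℝ) + 2)) := by
      have hco1 : (2:ℝ)^(n+3) * 10 ≤ (2:ℝ)^(2*n+8) := by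
        have : (2:ℝ)^(2*n+8) = (2:ℝ)^(n+3) * (2:ℝ)^(n+5) := by rw [← pow_add]; congr 1; ring
        rw [this]
        have h25 : (10:ℝ) ≤ (2:ℝ)^(n+5) := by
          calc (10:ℝ) ≤ 2^5 := by norm_num
          _ ≤ (2:ℝ)^(n+5) := by
              apply pow_le_pow_right₀ (by norm_num)
              omega
        nlinarith [pow_pos (show (0:ℝ) < 2 by norm_num) (n+3)]
      have hco2 : (2:ℝ)^(n+3) * (2:ℝ)^(n+1) ≤ (2:ℝ)^(2*n+8) := by
        rw [← pow_add]
        apply pow_le_pow_right₀ (by norm_num)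
        omega
      have ht20 : (0:ℝ) ≤ (t:ℝ) + 2 := by positivity
      have hAt : (0:ℝ) ≤ A * ((t:ℝ)+2) := mul_nonneg (by linarith) ht20
      have hBt : (0:ℝ) ≤ B * ((t:ℝ)+2) := mul_nonneg (by linarith) ht20
      have e1 : (2:ℝ)^(n+3)*10 * (A*((t:ℝ)+2)) ≤ (2:ℝ)^(2*n+8) * (A*((t:ℝ)+2)) :=
        mul_le_mul_of_nonneg_right hco1 hAt
      have e2 : (2:ℝ)^(n+3)*(2:ℝ)^(n+1) * (B*((t:ℝ)+2)) ≤ (2:ℝ)^(2*n+8) * (B*((t:ℝ)+2)) :=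
        mul_le_mul_of_nonneg_right hco2 hBt
      nlinarith [e1, e2]
    have h2 : (A + B) * ((t:ℝ) + 2) ≤ 2 * ε' * (A * B) := by
      have hA' : A * ((t:ℝ)+2) ≤ ε' * (A * B) := by
        have := mul_le_mul_of_nonneg_left hterr (by linarith : (0:ℝ) ≤ A)
        have h3 : A * (ε' * (2:ℝ) ^ ((t:ℝ)/(m:ℝ))) ≤ ε' * (A * B) := by
          have := mul_le_mul_of_nonneg_left htpB (by positivity : (0:ℝ) ≤ ε' * A)
          nlinarith
        linarith
      have hB' : B * ((t:ℝ)+2) ≤ ε' * (A * B) := by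
        have := mul_le_mul_of_nonneg_left hterr (by linarith : (0:ℝ) ≤ B)
        have h3 : B * (ε' * (2:ℝ) ^ ((t:ℝ)/(m:ℝ))) ≤ ε' * (A * B) := by
          have := mul_le_mul_of_nonneg_left htpA (by positivity : (0:ℝ) ≤ ε' * B)
          nlinarith
        linarith
      nlinarith
    have h4 : (2:ℝ)^(2*n+8) * (2 * ε' * (A*B)) = (1-c)/32 * (A * B) := by
      rw [hε']
      field_simp
    have h5 : (2^(n+3):ℝ) * Estar ≤ (2^(n+3):ℝ) * ((10 * A + 2^(n+1) * B) * ((t:ℝ) + 2)) :=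
      mul_le_mul_of_nonneg_left hEstar_le (by positivity)
    have h6 : (2:ℝ)^(2*n+8) * ((A + B) * ((t:ℝ) + 2)) ≤ (2:ℝ)^(2*n+8) * (2 * ε' * (A*B)) :=
      mul_le_mul_of_nonneg_left h2 (by positivity)
    calc (2^(n+3):ℝ) * Estar ≤ (2:ℝ)^(2*n+8) * ((A + B) * ((t:ℝ) + 2)) := by linarith
    _ ≤ (2:ℝ)^(2*n+8) * (2 * ε' * (A*B)) := h6
    _ = (1-c)/32 * (A * B) := h4
  constructor
  · -- lower bound
    rw [← hP]
    push_cast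
    calc (1-c)/32 * (A*B) = (1-c)/16 * (A*B) - (1-c)/32 * (A*B) := by ring
    _ ≤ (2^(n+3) : ℝ) * ((1-c)/16 * (y:ℝ) * B) - (2^(n+3) : ℝ) * Estar := by
        rw [hmain_id]; linarith
    _ = (2^(n+3) : ℝ) * ((1-c)/16 * (y:ℝ) * B - Estar) := by ring
    _ ≤ _ := by
        refine le_trans hsum_low ?_
        apply le_of_eq
        rfl
  · -- upper bound
    rw [← hP]
    push_cast
    have hub : ∀ a ∈ Finset.Ico (2^t) (2^(t+1)), ((Stmt8.W n m a).card : ℝ) ≤ B2 := by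
      intro a ha
      obtain ⟨h1, h2⟩ := Finset.mem_Ico.1 ha
      have ha1 : 1 ≤ a := le_trans Nat.one_le_two_pow h1
      calc ((Stmt8.W n m a).card : ℝ) ≤ ((Stmt8.V n m a).card : ℝ) := by
            exact_mod_cast Finset.card_le_card (Finset.filter_subset _ _)
      _ ≤ Stmt8.vr n m (a:ℝ) := Stmt8.cardV_upper hm ha1
      _ ≤ B2 := by
          rw [hB2, hA2]
          exact Stmt8.vr_mono n m (by positivity) (by exact_mod_cast h2.le)
    have hs := Finset.sum_le_card_nsmul (Finset.Ico (2^t) (2^(t+1))) _ _ hub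
    have hcio : (Finset.Ico (2^t) (2^(t+1))).card = 2^t := by
      rw [Nat.card_Ico, pow_succ]; omega
    rw [hcio, nsmul_eq_mul] at hs
    calc ∑ a ∈ Finset.Ico (2^t) (2^(t+1)), ((Stmt8.W n m a).card : ℝ)
        ≤ (2^t : ℝ) * B2 := by exact_mod_cast hs
    _ ≤ (2^t : ℝ) * (2^n * B) := by
        apply mul_le_mul_of_nonneg_left hB2n (by positivity)
    _ ≤ (2:ℝ)^(n+1) * (A*B) := by
        rw [hA_eq, pow_succ]
        nlinarith [mul_nonneg (mul_nonneg
          (pow_pos (show (0:ℝ) < 2 by norm_num) n).le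
          (pow_pos (show (0:ℝ) < 2 by norm_num) t).le) (by linarith : (0:ℝ) ≤ B)]
end

section
/- Let n, m, p ∈ ℕ with gcd(n,m) ≥ 2, n ≠ m or (n,m) ≠ (2,2), and suppose p > nm/(nm − n − m) (assuming nm − n − m > 0). Then for every decreasing positive function ψ with ψ(r) ≤ 1 eventually, the sum ∑_{(a,b)∈ℕ²} ψ(h_{a,b})/h_{a,b}^{1−1/p} converges, where h_{a,b} = max(aⁿ, bᵐ). -/
set_option maxHeartbeats 1000000 in
theorem stmt9 (n m p : ℕ) (hn : 1 ≤ n) (hm : 1 ≤ m) (hp : 1 ≤ p)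
    (hgcd : 2 ≤ Nat.gcd n m) (hnot22 : ¬ (n = 2 ∧ m = 2))
    (hdenom : 0 < n * m - n - m)
    (hplarge : ((n : ℝ) * m) / ((n : ℝ) * m - n - m) < (p : ℝ))
    (ψ : ℕ → ℝ) (hψpos : ∀ q, 0 < ψ q) (hψanti : Antitone ψ)
    (hψle : ∃ R : ℕ, ∀ r : ℕ, R ≤ r → ψ r ≤ 1) :
    Summable (fun ab : ℕ × ℕ =>
      ψ (max ((ab.1 + 1) ^ n) ((ab.2 + 1) ^ m)) /
        ((max ((ab.1 + 1) ^ n) ((ab.2 + 1) ^ m) : ℕ) : ℝ) ^ (1 - 1 / (p : ℝ))) := by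
  have hn0 : (0:ℝ) < n := by exact_mod_cast hn
  have hm0 : (0:ℝ) < m := by exact_mod_cast m.pos_of_ne_zero (by omega)
  have hp0 : (0:ℝ) < p := by exact_mod_cast hp
  -- denominator positivity in ℝ
  have hnm : n + m < n * m := by
    have h1 : m < n * m - n := Nat.lt_of_sub_pos hdenom
    omega
  have hD : (0:ℝ) < (n:ℝ) * m - n - m := by
    have : ((n:ℝ) + m) < (n:ℝ) * m := by exact_mod_cast hnm
    linarith
  have hmul : (n:ℝ) * m < p * ((n:ℝ) * m - n - m) := by
    have := (div_lt_iff₀ hD).mp hplarge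
    linarith
  set s : ℝ := 1 - 1 / (p:ℝ) with hs_def
  have key : (1:ℝ)/n + 1/m < s := by
    rw [div_add_div _ _ hn0.ne' hm0.ne', div_lt_iff₀ (by positivity)]
    have h1p : s = ((p:ℝ) - 1) / p := by rw [hs_def]; field_simp
    rw [h1p, div_mul_eq_mul_div, lt_div_iff₀ hp0]
    nlinarith [hmul]
  have hs_pos : 0 < s := lt_trans (by positivity) key
  set t1 : ℝ := (1 + ((n:ℝ)*s - (n:ℝ)/m))/2 with ht1_def
  set t2 : ℝ := (1 + ((m:ℝ)*s - (m:ℝ)/n))/2 with ht2_def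
  have hkn : 1 + (n:ℝ)/m < (n:ℝ)*s := by
    have h := mul_lt_mul_of_pos_left key hn0
    have he : (n:ℝ)*((1:ℝ)/n + 1/m) = 1 + (n:ℝ)/m := by field_simp
    linarith [he ▸ h]
  have hkm : 1 + (m:ℝ)/n < (m:ℝ)*s := by
    have h := mul_lt_mul_of_pos_left key hm0
    have he : (m:ℝ)*((1:ℝ)/n + 1/m) = 1 + (m:ℝ)/n := by field_simp; ring
    linarith [he ▸ h]
  have ht1 : 1 < t1 := by rw [ht1_def]; linarith
  have ht2 : 1 < t2 := by rw [ht2_def]; linarith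
  set α : ℝ := t1 / ((n:ℝ)*s) with hα_def
  have hns : (0:ℝ) < (n:ℝ)*s := mul_pos hn0 hs_pos
  have hms : (0:ℝ) < (m:ℝ)*s := mul_pos hm0 hs_pos
  have hα_sum : t1/((n:ℝ)*s) + t2/((m:ℝ)*s) = 1 := by
    rw [ht1_def, ht2_def]; field_simp; ring
  have hα0 : 0 < α := div_pos (by linarith) hns
  have h1α : 1 - α = t2/((m:ℝ)*s) := by rw [hα_def]; linarith
  have hα1 : α ≤ 1 := by
    have h2 : 0 ≤ t2/((m:ℝ)*s) := by positivity
    linarith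
  have hαt1 : (n:ℝ) * α * s = t1 := by rw [hα_def]; field_simp
  have hαt2 : (m:ℝ) * (1-α) * s = t2 := by rw [h1α]; field_simp
  -- summable bound functions
  have hsum1 : Summable (fun a : ℕ => ((a:ℝ)+1) ^ (-t1)) := by
    have h0 : Summable (fun a : ℕ => ((a:ℝ)) ^ (-t1)) :=
      Real.summable_nat_rpow.2 (by linarith)
    have h1 := (summable_nat_add_iff 1).2 h0
    refine h1.congr fun a => ?_
    push_cast; ring_nf
  have hsum2 : Summable (fun b : ℕ => ((b:ℝ)+1) ^ (-t2)) := by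
    have h0 : Summable (fun b : ℕ => ((b:ℝ)) ^ (-t2)) :=
      Real.summable_nat_rpow.2 (by linarith)
    have h1 := (summable_nat_add_iff 1).2 h0
    refine h1.congr fun b => ?_
    push_cast; ring_nf
  have hsum : Summable (fun ab : ℕ × ℕ => ((ab.1:ℝ)+1) ^ (-t1) * ((ab.2:ℝ)+1) ^ (-t2)) :=
    hsum1.mul_of_nonneg hsum2 (fun a => by positivity) (fun b => by positivity)
  refine Summable.of_nonneg_of_le (fun ab => ?_) (fun ab => ?_) (hsum.mul_left (ψ 0))
  · have hpos : (0:ℕ) < max ((ab.1 + 1) ^ n) ((ab.2 + 1) ^ m) :=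
      lt_max_of_lt_left (pow_pos (Nat.succ_pos _) n)
    have h0 : (0:ℝ) ≤ ((max ((ab.1 + 1) ^ n) ((ab.2 + 1) ^ m) : ℕ) : ℝ) := Nat.cast_nonneg _
    exact div_nonneg (hψpos _).le (Real.rpow_nonneg h0 _)
  · set x : ℝ := (ab.1:ℝ)+1 with hx_def
    set y : ℝ := (ab.2:ℝ)+1 with hy_def
    have hx1 : (1:ℝ) ≤ x := by rw [hx_def]; exact le_add_of_nonneg_left (Nat.cast_nonneg _)
    have hy1 : (1:ℝ) ≤ y := by rw [hy_def]; exact le_add_of_nonneg_left (Nat.cast_nonneg _)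
    have hx0 : (0:ℝ) < x := lt_of_lt_of_le one_pos hx1
    have hy0 : (0:ℝ) < y := lt_of_lt_of_le one_pos hy1
    have hX1 : (1:ℝ) ≤ x ^ n := one_le_pow₀ hx1
    have hY1 : (1:ℝ) ≤ y ^ m := one_le_pow₀ hy1
    set H : ℝ := max (x ^ n) (y ^ m) with hH_def
    have hcast : ((max ((ab.1 + 1) ^ n) ((ab.2 + 1) ^ m) : ℕ) : ℝ) = H := by
      rw [hH_def, hx_def, hy_def]; push_cast [Nat.cast_max]; ring_nf
    have hH1 : (1:ℝ) ≤ H := le_max_of_le_left hX1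
    have hH0 : (0:ℝ) < H := lt_of_lt_of_le one_pos hH1
    -- geometric mean bound
    have hgm : x ^ ((n:ℝ) * α) * y ^ ((m:ℝ) * (1-α)) ≤ H := by
      have e1 : x ^ ((n:ℝ) * α) = (x ^ n) ^ α := by
        rw [Real.rpow_mul hx0.le, Real.rpow_natCast]
      have e2 : y ^ ((m:ℝ) * (1-α)) = (y ^ m) ^ (1-α) := by
        rw [Real.rpow_mul hy0.le, Real.rpow_natCast]
      have l1 : (x ^ n) ^ α ≤ H ^ α :=
        Real.rpow_le_rpow (by positivity) (le_max_left _ _) hα0.le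
      have l2 : (y ^ m) ^ (1-α) ≤ H ^ (1-α) :=
        Real.rpow_le_rpow (by positivity) (le_max_right _ _) (by linarith)
      calc x ^ ((n:ℝ) * α) * y ^ ((m:ℝ) * (1-α))
          ≤ H ^ α * H ^ (1-α) := by
            rw [e1, e2]
            exact mul_le_mul l1 l2 (by positivity) (by positivity)
        _ = H := by rw [← Real.rpow_add hH0]; norm_num
    have hkey : H ^ (-s) ≤ x ^ (-t1) * y ^ (-t2) := by
      have hGpos : (0:ℝ) < x ^ ((n:ℝ) * α) * y ^ ((m:ℝ) * (1-α)) := by positivity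
      have h := Real.rpow_le_rpow_of_nonpos hGpos hgm (neg_nonpos.2 hs_pos.le)
      calc H ^ (-s) ≤ (x ^ ((n:ℝ) * α) * y ^ ((m:ℝ) * (1-α))) ^ (-s) := h
        _ = x ^ (-t1) * y ^ (-t2) := by
            rw [Real.mul_rpow (by positivity) (by positivity),
              ← Real.rpow_mul hx0.le, ← Real.rpow_mul hy0.le]
            rw [show (n:ℝ) * α * -s = -t1 by rw [← hαt1]; ring,
              show (m:ℝ) * (1-α) * -s = -t2 by rw [← hαt2]; ring]
    have hψ0 : ψ (max ((ab.1 + 1) ^ n) ((ab.2 + 1) ^ m)) ≤ ψ 0 := hψanti (Nat.zero_le _)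
    calc ψ (max ((ab.1 + 1) ^ n) ((ab.2 + 1) ^ m)) /
          ((max ((ab.1 + 1) ^ n) ((ab.2 + 1) ^ m) : ℕ) : ℝ) ^ s
        = ψ (max ((ab.1 + 1) ^ n) ((ab.2 + 1) ^ m)) * H ^ (-s) := by
          rw [hcast, Real.rpow_neg hH0.le, div_eq_mul_inv]
      _ ≤ ψ 0 * (x ^ (-t1) * y ^ (-t2)) :=
          mul_le_mul hψ0 hkey (by positivity) (hψpos 0).le
end

section
/- Let n, m ∈ ℕ, k = gcd(n,m) ≥ 2, and let (a₁,b₁) ≠ (a₂,b₂) be coprime pairs in ℕ² with 1/2 < aᵢⁿ/bᵢᵐ < 2 for i = 1,2. Set hᵢ = max(aᵢⁿ, bᵢᵐ) and let α be the (acute) angle between the vectors (a₁ⁿ, b₁ᵐ) and (a₂ⁿ, b₂ᵐ). Then sin α ≫ h₁^{−1/k} h₂^{−1/k}, with implied constant depending only on n and m. -/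
set_option maxHeartbeats 1000000

lemma stmt16_aux (k x y : ℕ) (hk : 1 ≤ k) (h : y < x) :
    x ^ (k - 1) + y ^ k ≤ x ^ k := by
  obtain ⟨j, rfl⟩ : ∃ j, k = j + 1 := ⟨k - 1, by omega⟩
  simp only [Nat.add_sub_cancel, pow_succ]
  have h1 : y ^ j ≤ x ^ j := Nat.pow_le_pow_left h.le j
  calc x ^ j + y ^ j * y ≤ x ^ j + x ^ j * y := by
        exact Nat.add_le_add_left (Nat.mul_le_mul_right y h1) _
    _ = x ^ j * (y + 1) := by ring
    _ ≤ x ^ j * x := Nat.mul_le_mul_left _ h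

theorem stmt16 (n m : ℕ) (hn : 1 ≤ n) (hm : 1 ≤ m) (hk : 2 ≤ Nat.gcd n m) :
    ∃ c : ℝ, 0 < c ∧ ∀ a₁ b₁ a₂ b₂ : ℕ,
      1 ≤ a₁ → 1 ≤ b₁ → 1 ≤ a₂ → 1 ≤ b₂ →
      Nat.Coprime a₁ b₁ → Nat.Coprime a₂ b₂ → (a₁, b₁) ≠ (a₂, b₂) →
      (1 : ℝ) / 2 < (a₁ : ℝ) ^ n / (b₁ : ℝ) ^ m → (a₁ : ℝ) ^ n / (b₁ : ℝ) ^ m < 2 →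
      (1 : ℝ) / 2 < (a₂ : ℝ) ^ n / (b₂ : ℝ) ^ m → (a₂ : ℝ) ^ n / (b₂ : ℝ) ^ m < 2 →
      c * ((max (a₁ ^ n) (b₁ ^ m) : ℕ) : ℝ) ^ (-(1 : ℝ) / (Nat.gcd n m : ℝ)) *
          ((max (a₂ ^ n) (b₂ ^ m) : ℕ) : ℝ) ^ (-(1 : ℝ) / (Nat.gcd n m : ℝ)) ≤
        |(a₁ : ℝ) ^ n * (b₂ : ℝ) ^ m - (a₂ : ℝ) ^ n * (b₁ : ℝ) ^ m| /
          (Real.sqrt ((a₁ : ℝ) ^ (2 * n) + (b₁ : ℝ) ^ (2 * m)) *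
            Real.sqrt ((a₂ : ℝ) ^ (2 * n) + (b₂ : ℝ) ^ (2 * m))) := by
  set K := Nat.gcd n m with hKdef
  have hKn : K ∣ n := Nat.gcd_dvd_left n m
  have hKm : K ∣ m := Nat.gcd_dvd_right n m
  have hK1 : 1 ≤ K := by omega
  have hKR : (0:ℝ) < (K:ℝ) := by exact_mod_cast Nat.lt_of_lt_of_le Nat.zero_lt_two hk
  have hKne : (K:ℝ) ≠ 0 := ne_of_gt hKR
  refine ⟨1/8, by norm_num, ?_⟩
  intro a₁ b₁ a₂ b₂ ha₁ hb₁ ha₂ hb₂ hcop₁ hcop₂ hne h1l h1r h2l h2r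
  -- positivity
  have hA₁ : (0:ℝ) < (a₁:ℝ) ^ n := by positivity
  have hB₁ : (0:ℝ) < (b₁:ℝ) ^ m := by
    have : (0:ℝ) < (b₁:ℝ) := by exact_mod_cast hb₁
    positivity
  have hB₂ : (0:ℝ) < (b₂:ℝ) ^ m := by
    have : (0:ℝ) < (b₂:ℝ) := by exact_mod_cast hb₂
    positivity
  have hA₂ : (0:ℝ) < (a₂:ℝ) ^ n := by
    have : (0:ℝ) < (a₂:ℝ) := by exact_mod_cast ha₂
    positivity
  -- ratio bounds, in ℕ
  have hb1a1 : b₁ ^ m ≤ 2 * a₁ ^ n := by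
    have h := (lt_div_iff₀ hB₁).mp h1l
    have : ((b₁ ^ m : ℕ) : ℝ) < ((2 * a₁ ^ n : ℕ) : ℝ) := by push_cast; nlinarith
    exact_mod_cast this.le
  have ha2b2 : a₂ ^ n ≤ 2 * b₂ ^ m := by
    have h := (div_lt_iff₀ hB₂).mp h2r
    have : ((a₂ ^ n : ℕ) : ℝ) < ((2 * b₂ ^ m : ℕ) : ℝ) := by push_cast; linarith
    exact_mod_cast this.le
  -- the integer points
  set x := a₁ ^ (n / K) * b₂ ^ (m / K) with hxdef
  set y := a₂ ^ (n / K) * b₁ ^ (m / K) with hydef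
  have hxk : x ^ K = a₁ ^ n * b₂ ^ m := by
    rw [hxdef, mul_pow, ← pow_mul, ← pow_mul, Nat.div_mul_cancel hKn, Nat.div_mul_cancel hKm]
  have hyk : y ^ K = a₂ ^ n * b₁ ^ m := by
    rw [hydef, mul_pow, ← pow_mul, ← pow_mul, Nat.div_mul_cancel hKn, Nat.div_mul_cancel hKm]
  have hxy : x ≠ y := by
    intro h
    have heq : a₁ ^ n * b₂ ^ m = a₂ ^ n * b₁ ^ m := by rw [← hxk, ← hyk, h]
    have hc1 : Nat.Coprime (a₁ ^ n) (b₁ ^ m) := Nat.Coprime.pow _ _ hcop₁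
    have hc2 : Nat.Coprime (a₂ ^ n) (b₂ ^ m) := Nat.Coprime.pow _ _ hcop₂
    have hd1 : a₁ ^ n ∣ a₂ ^ n := hc1.dvd_of_dvd_mul_right ⟨b₂ ^ m, heq.symm⟩
    have hd2 : a₂ ^ n ∣ a₁ ^ n := hc2.dvd_of_dvd_mul_right ⟨b₁ ^ m, heq⟩
    have heqa : a₁ ^ n = a₂ ^ n := Nat.dvd_antisymm hd1 hd2
    have ha : a₁ = a₂ := Nat.pow_left_injective (by omega) heqa
    have heqb : b₂ ^ m = b₁ ^ m := by
      have hpos : 0 < a₁ ^ n := pow_pos ha₁ n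
      exact Nat.eq_of_mul_eq_mul_left hpos (by rw [heq, heqa])
    have hb : b₁ = b₂ := (Nat.pow_left_injective (by omega) heqb).symm
    exact hne (by rw [ha, hb])
  have hx1 : 1 ≤ x := Nat.one_le_iff_ne_zero.mpr (by positivity)
  have hy1 : 1 ≤ y := Nat.one_le_iff_ne_zero.mpr (by positivity)
  -- notation
  set h₁ := max (a₁ ^ n) (b₁ ^ m) with hh1
  set h₂ := max (a₂ ^ n) (b₂ ^ m) with hh2
  set M := max x y with hM
  have hM1 : 1 ≤ M := le_trans hx1 (le_max_left _ _)
  have hMR : (1:ℝ) ≤ (M:ℝ) := by exact_mod_cast hM1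
  have hH₁1 : 1 ≤ h₁ := le_trans (Nat.one_le_pow n a₁ (by omega)) (le_max_left _ _)
  have hH₂1 : 1 ≤ h₂ := le_trans (Nat.one_le_pow n a₂ (by omega)) (le_max_left _ _)
  have hH₁R : (1:ℝ) ≤ (h₁:ℝ) := by exact_mod_cast hH₁1
  have hH₂R : (1:ℝ) ≤ (h₂:ℝ) := by exact_mod_cast hH₂1
  -- lower bound for |D|
  set D := (a₁ : ℝ) ^ n * (b₂ : ℝ) ^ m - (a₂ : ℝ) ^ n * (b₁ : ℝ) ^ m with hD
  have hDcast : D = ((x ^ K : ℕ) : ℝ) - ((y ^ K : ℕ) : ℝ) := by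
    rw [hxk, hyk]; push_cast; ring
  have hDlb : ((M:ℝ)) ^ (K - 1) ≤ |D| := by
    rcases hxy.lt_or_gt with hlt | hlt
    · -- x < y
      have haux := stmt16_aux K y x hK1 hlt
      have hMeq : M = y := max_eq_right hlt.le
      have h1 : ((y ^ (K-1) : ℕ) : ℝ) + ((x ^ K : ℕ):ℝ) ≤ ((y ^ K : ℕ):ℝ) := by
        exact_mod_cast haux
      rw [hDcast, abs_sub_comm, abs_of_nonneg (by
        have : (x : ℕ) ^ K ≤ y ^ K := Nat.pow_le_pow_left hlt.le K
        have := (Nat.cast_le (α := ℝ)).mpr this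
        linarith)]
      rw [hMeq]
      push_cast at h1 ⊢
      linarith
    · -- y < x
      have haux := stmt16_aux K x y hK1 hlt
      have hMeq : M = x := max_eq_left hlt.le
      have h1 : ((x ^ (K-1) : ℕ) : ℝ) + ((y ^ K : ℕ):ℝ) ≤ ((x ^ K : ℕ):ℝ) := by
        exact_mod_cast haux
      rw [hDcast, abs_of_nonneg (by
        have : (y : ℕ) ^ K ≤ x ^ K := Nat.pow_le_pow_left hlt.le K
        have := (Nat.cast_le (α := ℝ)).mpr this
        linarith)]
      rw [hMeq]
      push_cast at h1 ⊢
      linarith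
  -- bound on h₁ h₂ vs M^K
  have hPM : (h₁ : ℝ) * (h₂ : ℝ) ≤ 4 * (M:ℝ) ^ K := by
    have e1 : h₁ ≤ 2 * a₁ ^ n := max_le (by omega) hb1a1
    have e2 : h₂ ≤ 2 * b₂ ^ m := max_le ha2b2 (by omega)
    have e3 : h₁ * h₂ ≤ 4 * x ^ K := by
      calc h₁ * h₂ ≤ (2 * a₁ ^ n) * (2 * b₂ ^ m) := Nat.mul_le_mul e1 e2
        _ = 4 * (a₁ ^ n * b₂ ^ m) := by ring
        _ = 4 * x ^ K := by rw [hxk]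
    have e4 : x ^ K ≤ M ^ K := Nat.pow_le_pow_left (le_max_left _ _) K
    have : h₁ * h₂ ≤ 4 * M ^ K := le_trans e3 (by omega)
    have := (Nat.cast_le (α := ℝ)).mpr this
    push_cast at this
    linarith
  -- sqrt bounds
  have hS₁ : Real.sqrt ((a₁ : ℝ) ^ (2 * n) + (b₁ : ℝ) ^ (2 * m)) ≤ Real.sqrt 2 * (h₁:ℝ) := by
    have hle : (a₁ : ℝ) ^ (2 * n) + (b₁ : ℝ) ^ (2 * m) ≤ 2 * (h₁:ℝ) ^ 2 := by
      have e1 : ((a₁ ^ n : ℕ):ℝ) ≤ (h₁:ℝ) := by exact_mod_cast le_max_left (a₁^n) (b₁^m)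
      have e2 : ((b₁ ^ m : ℕ):ℝ) ≤ (h₁:ℝ) := by exact_mod_cast le_max_right (a₁^n) (b₁^m)
      push_cast at e1 e2
      rw [mul_comm 2 n, mul_comm 2 m, pow_mul, pow_mul]
      nlinarith
    calc Real.sqrt ((a₁ : ℝ) ^ (2 * n) + (b₁ : ℝ) ^ (2 * m)) ≤ Real.sqrt (2 * (h₁:ℝ)^2) :=
          Real.sqrt_le_sqrt hle
      _ = Real.sqrt 2 * (h₁:ℝ) := by
          rw [Real.sqrt_mul (by norm_num), Real.sqrt_sq (by linarith)]
  have hS₂ : Real.sqrt ((a₂ : ℝ) ^ (2 * n) + (b₂ : ℝ) ^ (2 * m)) ≤ Real.sqrt 2 * (h₂:ℝ) := by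
    have hle : (a₂ : ℝ) ^ (2 * n) + (b₂ : ℝ) ^ (2 * m) ≤ 2 * (h₂:ℝ) ^ 2 := by
      have e1 : ((a₂ ^ n : ℕ):ℝ) ≤ (h₂:ℝ) := by exact_mod_cast le_max_left (a₂^n) (b₂^m)
      have e2 : ((b₂ ^ m : ℕ):ℝ) ≤ (h₂:ℝ) := by exact_mod_cast le_max_right (a₂^n) (b₂^m)
      push_cast at e1 e2
      rw [mul_comm 2 n, mul_comm 2 m, pow_mul, pow_mul]
      nlinarith [hA₂, hB₂]
    calc Real.sqrt ((a₂ : ℝ) ^ (2 * n) + (b₂ : ℝ) ^ (2 * m)) ≤ Real.sqrt (2 * (h₂:ℝ)^2) :=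
          Real.sqrt_le_sqrt hle
      _ = Real.sqrt 2 * (h₂:ℝ) := by
          rw [Real.sqrt_mul (by norm_num), Real.sqrt_sq (by linarith)]
  have hS₁pos : 0 < Real.sqrt ((a₁ : ℝ) ^ (2 * n) + (b₁ : ℝ) ^ (2 * m)) := by
    apply Real.sqrt_pos.mpr
    have : (0:ℝ) < (a₁:ℝ) := by exact_mod_cast ha₁
    positivity
  have hS₂pos : 0 < Real.sqrt ((a₂ : ℝ) ^ (2 * n) + (b₂ : ℝ) ^ (2 * m)) := by
    apply Real.sqrt_pos.mpr
    have : (0:ℝ) < (a₂:ℝ) := by exact_mod_cast ha₂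
    positivity
  set P := (h₁:ℝ) * (h₂:ℝ) with hPdef
  have hP1 : (1:ℝ) ≤ P := one_le_mul_of_one_le_of_one_le hH₁R hH₂R
  have hP0 : (0:ℝ) < P := by linarith
  -- key rpow inequality : P ^ ((K-1)/K) ≤ 4 * M^(K-1)
  have hMpow : ((M:ℝ) ^ K) ^ ((1:ℝ)/(K:ℝ)) = (M:ℝ) := by
    rw [← Real.rpow_natCast (M:ℝ) K, ← Real.rpow_mul (by linarith)]
    rw [show (K:ℝ) * ((1:ℝ)/(K:ℝ)) = 1 by field_simp]
    exact Real.rpow_one _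
  have e1 : P ^ ((1:ℝ)/(K:ℝ)) ≤ (4:ℝ) ^ ((1:ℝ)/(K:ℝ)) * (M:ℝ) := by
    calc P ^ ((1:ℝ)/(K:ℝ)) ≤ ((4:ℝ) * (M:ℝ) ^ K) ^ ((1:ℝ)/(K:ℝ)) :=
          Real.rpow_le_rpow (le_of_lt hP0) hPM (by positivity)
      _ = (4:ℝ) ^ ((1:ℝ)/(K:ℝ)) * ((M:ℝ) ^ K) ^ ((1:ℝ)/(K:ℝ)) :=
          Real.mul_rpow (by norm_num) (by positivity)
      _ = (4:ℝ) ^ ((1:ℝ)/(K:ℝ)) * (M:ℝ) := by rw [hMpow]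
  have hkey2 : P ^ (((K:ℝ)-1)/(K:ℝ)) ≤ 4 * (M:ℝ) ^ (K - 1) := by
    have h := pow_le_pow_left₀ (Real.rpow_nonneg (le_of_lt hP0) _) e1 (K - 1)
    have lhs_eq : (P ^ ((1:ℝ)/(K:ℝ))) ^ (K - 1) = P ^ (((K:ℝ)-1)/(K:ℝ)) := by
      rw [← Real.rpow_natCast (P ^ ((1:ℝ)/(K:ℝ))) (K-1), ← Real.rpow_mul (le_of_lt hP0)]
      congr 1
      rw [Nat.cast_sub hK1]
      push_cast
      field_simp
    have rhs_le : ((4:ℝ) ^ ((1:ℝ)/(K:ℝ)) * (M:ℝ)) ^ (K - 1) ≤ 4 * (M:ℝ) ^ (K - 1) := by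
      rw [mul_pow]
      have h4 : ((4:ℝ) ^ ((1:ℝ)/(K:ℝ))) ^ (K - 1) ≤ 4 := by
        rw [← Real.rpow_natCast ((4:ℝ) ^ ((1:ℝ)/(K:ℝ))) (K-1), ← Real.rpow_mul (by norm_num)]
        calc (4:ℝ) ^ ((1:ℝ)/(K:ℝ) * ((K-1:ℕ):ℝ)) ≤ (4:ℝ) ^ (1:ℝ) := by
              apply Real.rpow_le_rpow_of_exponent_le (by norm_num)
              rw [Nat.cast_sub hK1]
              push_cast
              rw [div_mul_eq_mul_div, one_mul, div_le_one hKR]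
              linarith
          _ = 4 := Real.rpow_one _
      have hMp : (0:ℝ) ≤ (M:ℝ) ^ (K-1) := by positivity
      exact mul_le_mul_of_nonneg_right h4 hMp
    rw [lhs_eq] at h
    exact le_trans h rhs_le
  -- final chain
  have key : (1/8 : ℝ) * (h₁:ℝ) ^ (-(1:ℝ)/(K:ℝ)) * (h₂:ℝ) ^ (-(1:ℝ)/(K:ℝ)) ≤
      (M:ℝ) ^ (K - 1) / (2 * P) := by
    have hmul : (h₁:ℝ) ^ (-(1:ℝ)/(K:ℝ)) * (h₂:ℝ) ^ (-(1:ℝ)/(K:ℝ)) = P ^ (-(1:ℝ)/(K:ℝ)) := by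
      rw [hPdef, Real.mul_rpow (by linarith) (by linarith)]
    have hPP : P ^ (-(1:ℝ)/(K:ℝ)) * P = P ^ (((K:ℝ)-1)/(K:ℝ)) := by
      nth_rewrite 2 [← Real.rpow_one P]
      rw [← Real.rpow_add hP0]
      congr 1
      field_simp
      ring
    have h8 : P ^ (-(1:ℝ)/(K:ℝ)) * (2 * P) ≤ (M:ℝ) ^ (K - 1) * 8 := by
      calc P ^ (-(1:ℝ)/(K:ℝ)) * (2 * P) = 2 * (P ^ (-(1:ℝ)/(K:ℝ)) * P) := by ring
        _ = 2 * P ^ (((K:ℝ)-1)/(K:ℝ)) := by rw [hPP]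
        _ ≤ 2 * (4 * (M:ℝ) ^ (K - 1)) := by linarith [hkey2]
        _ = (M:ℝ) ^ (K - 1) * 8 := by ring
    rw [mul_assoc, hmul, le_div_iff₀ (by positivity : (0:ℝ) < 2 * P)]
    nlinarith [h8]
  calc (1/8 : ℝ) * (h₁:ℝ) ^ (-(1:ℝ)/(K:ℝ)) * (h₂:ℝ) ^ (-(1:ℝ)/(K:ℝ)) ≤
        (M:ℝ) ^ (K - 1) / (2 * P) := key
    _ ≤ |D| / (Real.sqrt ((a₁ : ℝ) ^ (2 * n) + (b₁ : ℝ) ^ (2 * m)) *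
            Real.sqrt ((a₂ : ℝ) ^ (2 * n) + (b₂ : ℝ) ^ (2 * m))) := by
        apply div_le_div₀ (abs_nonneg _) hDlb (by positivity)
        calc Real.sqrt ((a₁ : ℝ) ^ (2 * n) + (b₁ : ℝ) ^ (2 * m)) *
              Real.sqrt ((a₂ : ℝ) ^ (2 * n) + (b₂ : ℝ) ^ (2 * m)) ≤
              (Real.sqrt 2 * (h₁:ℝ)) * (Real.sqrt 2 * (h₂:ℝ)) := by
              apply mul_le_mul hS₁ hS₂ (le_of_lt hS₂pos) (by positivity)
          _ = (Real.sqrt 2 * Real.sqrt 2) * P := by rw [hPdef]; ring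
          _ = 2 * P := by rw [Real.mul_self_sqrt (by norm_num)]
end

section
/- Let n, m, p ∈ ℕ with either n = m = p = 1 or gcd(n,m) ≥ 2, and let ψ be a decreasing positive function. Let f be a dimension function such that r^{−2}f(r) is monotonic, and set g(r) = r^{−1}f(r). If ∑_{(a,b)∈ℕ²} g(ψ(h_{a,b})/h_{a,b}) · h_{a,b}^{1/p} < ∞, where h_{a,b} = max(aⁿ,bᵐ), then the Hausdorff f-measure of the set W_{n,m}^p(ψ) of (x,y) ∈ [0,1)² satisfying |aⁿx + bᵐy − cᵖ| < ψ(h_{a,b}) for infinitely many (a,b,c) is zero. -/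
open MeasureTheory
open scoped ENNReal Classical

noncomputable def sbase (A B γ ε : ℝ) (j : ℕ) : ℝ :=
  (⌊((γ - ε - A*((j:ℝ)+1)*(ε/B))/B)/(ε/B)⌋ : ℤ)

def Hb (n m a b : ℕ) : ℕ := max ((a+1)^n) ((b+1)^m)

noncomputable def dl (n m : ℕ) (ψ : ℕ → ℝ) (a b : ℕ) : ℝ := ψ (Hb n m a b) / (Hb n m a b : ℝ)

noncomputable def covSet (n m p : ℕ) (ψ : ℕ → ℝ) (N : ℕ) (i : (ℕ × ℕ) × ℕ × ℕ × ℕ) :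
    Set (ℝ × ℝ) :=
  if N ≤ max i.1.1 i.1.2 ∧
      (i.2.1 : ℝ) ≤ (2*((Hb n m i.1.1 i.1.2 : ℕ) : ℝ) + ψ 0)^(1/(p:ℝ)) ∧
      i.2.2.1 ≤ ⌊1/(dl n m ψ i.1.1 i.1.2)⌋₊ ∧
      i.2.2.2 < 4 then
    (if ((i.1.1+1)^n : ℕ) ≤ ((i.1.2+1)^m : ℕ) then
       Set.Icc ((i.2.2.1:ℝ)*(dl n m ψ i.1.1 i.1.2))
               ((i.2.2.1:ℝ)*(dl n m ψ i.1.1 i.1.2) + dl n m ψ i.1.1 i.1.2) ×ˢ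
         Set.Icc ((sbase (((i.1.1+1)^n : ℕ):ℝ) (((i.1.2+1)^m : ℕ):ℝ) ((i.2.1:ℝ)^p)
                    (ψ (Hb n m i.1.1 i.1.2)) i.2.2.1 + (i.2.2.2:ℝ))*(dl n m ψ i.1.1 i.1.2))
                 ((sbase (((i.1.1+1)^n : ℕ):ℝ) (((i.1.2+1)^m : ℕ):ℝ) ((i.2.1:ℝ)^p)
                    (ψ (Hb n m i.1.1 i.1.2)) i.2.2.1 + (i.2.2.2:ℝ))*(dl n m ψ i.1.1 i.1.2)
                   + dl n m ψ i.1.1 i.1.2)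
     else
       Set.Icc ((sbase (((i.1.2+1)^m : ℕ):ℝ) (((i.1.1+1)^n : ℕ):ℝ) ((i.2.1:ℝ)^p)
                  (ψ (Hb n m i.1.1 i.1.2)) i.2.2.1 + (i.2.2.2:ℝ))*(dl n m ψ i.1.1 i.1.2))
               ((sbase (((i.1.2+1)^m : ℕ):ℝ) (((i.1.1+1)^n : ℕ):ℝ) ((i.2.1:ℝ)^p)
                  (ψ (Hb n m i.1.1 i.1.2)) i.2.2.1 + (i.2.2.2:ℝ))*(dl n m ψ i.1.1 i.1.2)
                 + dl n m ψ i.1.1 i.1.2) ×ˢ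
         Set.Icc ((i.2.2.1:ℝ)*(dl n m ψ i.1.1 i.1.2))
                 ((i.2.2.1:ℝ)*(dl n m ψ i.1.1 i.1.2) + dl n m ψ i.1.1 i.1.2))
  else ∅

lemma diam_sq_le (x0 y0 d : ℝ) :
    EMetric.diam (Set.Icc x0 (x0+d) ×ˢ Set.Icc y0 (y0+d)) ≤ ENNReal.ofReal d := by
  apply EMetric.diam_le
  rintro ⟨u1, u2⟩ ⟨hu1, hu2⟩ ⟨v1, v2⟩ ⟨hv1, hv2⟩
  rw [Prod.edist_eq]
  apply max_le <;> rw [edist_dist] <;> apply ENNReal.ofReal_le_ofReal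
  · simpa using Real.dist_le_of_mem_Icc hu1 hv1
  · simpa using Real.dist_le_of_mem_Icc hu2 hv2

lemma Hr_ge (n m : ℕ) (hn : 1 ≤ n) (hm : 1 ≤ m) (N a b : ℕ) (hab : N ≤ max a b) :
    (N : ℝ) + 1 ≤ ((Hb n m a b : ℕ) : ℝ) := by
  have h1 : a + 1 ≤ (a+1)^n := Nat.le_self_pow (by omega) _
  have h2 : b + 1 ≤ (b+1)^m := Nat.le_self_pow (by omega) _
  have : N + 1 ≤ Hb n m a b := by
    rcases le_max_iff.1 hab with h | h
    · exact le_trans (by omega) (le_max_of_le_left h1)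
    · exact le_trans (by omega) (le_max_of_le_right h2)
  exact_mod_cast this

lemma Hr_one_le (n m a b : ℕ) : (1:ℝ) ≤ ((Hb n m a b : ℕ) : ℝ) := by
  have : 1 ≤ Hb n m a b := le_max_of_le_left (Nat.one_le_pow _ _ (by omega))
  exact_mod_cast this

lemma Hr_pos (n m a b : ℕ) : (0:ℝ) < ((Hb n m a b : ℕ) : ℝ) :=
  lt_of_lt_of_le one_pos (Hr_one_le n m a b)

lemma dl_pos (n m : ℕ) (ψ : ℕ → ℝ) (hψpos : ∀ q, 0 < ψ q) (a b : ℕ) :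
    0 < dl n m ψ a b := div_pos (hψpos _) (Hr_pos n m a b)

lemma dl_le (n m : ℕ) (ψ : ℕ → ℝ) (hψpos : ∀ q, 0 < ψ q) (hψanti : Antitone ψ) (a b : ℕ) :
    dl n m ψ a b ≤ ψ 0 := by
  calc dl n m ψ a b ≤ ψ (Hb n m a b) := by
        rw [dl]
        exact div_le_self (hψpos _).le (Hr_one_le n m a b)
    _ ≤ ψ 0 := hψanti (Nat.zero_le _)

lemma covDiam (n m p : ℕ) (hn : 1 ≤ n) (hm : 1 ≤ m) (ψ : ℕ → ℝ)
    (hψpos : ∀ q, 0 < ψ q) (hψanti : Antitone ψ) (N : ℕ) (i : (ℕ × ℕ) × ℕ × ℕ × ℕ) :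
    EMetric.diam (covSet n m p ψ N i) ≤ ENNReal.ofReal (ψ 0 / ((N:ℝ)+1)) := by
  rw [covSet]
  split
  · rename_i hcond
    have hHge : (N:ℝ) + 1 ≤ ((Hb n m i.1.1 i.1.2 : ℕ) : ℝ) := Hr_ge n m hn hm _ _ _ hcond.1
    have hδle : dl n m ψ i.1.1 i.1.2 ≤ ψ 0 / ((N:ℝ)+1) := by
      rw [dl]
      exact div_le_div₀ (le_of_lt (hψpos 0)) (hψanti (Nat.zero_le _)) (by positivity) hHge
    refine le_trans ?_ (ENNReal.ofReal_le_ofReal hδle)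
    split <;> exact diam_sq_le _ _ _
  · simp [EMetric.diam]
lemma coverAux {A B γ ε x y : ℝ} (hA : 0 < A) (hAB : A ≤ B) (hε : 0 < ε)
    (hx0 : 0 ≤ x) (hx1 : x < 1) (hy0 : 0 ≤ y)
    (hstrip : |A*x + B*y - γ| < ε) :
    ∃ j o : ℕ, j ≤ Nat.floor (1/(ε/B)) ∧ o < 4 ∧
      x ∈ Set.Icc ((j:ℝ)*(ε/B)) ((j:ℝ)*(ε/B) + (ε/B)) ∧
      y ∈ Set.Icc ((sbase A B γ ε j + (o:ℝ))*(ε/B))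
                  ((sbase A B γ ε j + (o:ℝ))*(ε/B) + (ε/B)) := by
  have hB : 0 < B := hA.trans_le hAB
  set δ := ε / B with hδdef
  have hδ : 0 < δ := div_pos hε hB
  have hδB : B * δ = ε := by rw [hδdef]; field_simp
  set j := ⌊x/δ⌋₊ with hjdef
  have hjx : (j:ℝ)*δ ≤ x := by
    have h1 : (j:ℝ) ≤ x/δ := Nat.floor_le (div_nonneg hx0 hδ.le)
    calc (j:ℝ)*δ ≤ (x/δ)*δ := by gcongr
      _ = x := by field_simp
  have hxj : x ≤ (j:ℝ)*δ + δ := by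
    have h1 : x/δ < (j:ℝ) + 1 := Nat.lt_floor_add_one _
    have := (div_lt_iff₀ hδ).1 h1
    linarith
  set L : ℝ := (γ - ε - A*((j:ℝ)+1)*δ)/B with hLdef
  have hBL : B * L = γ - ε - A*((j:ℝ)+1)*δ := by rw [hLdef]; field_simp
  have habs := abs_lt.1 hstrip
  have hAδ : A*δ ≤ B*δ := by gcongr
  have hyL : L ≤ y := by
    by_contra hcon
    push_neg at hcon
    have h2 : B*y < B*L := by gcongr
    have h3 : A*x ≤ A*((j:ℝ)*δ + δ) := by gcongr
    nlinarith [habs.1]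
  have hyU : y ≤ L + 3*δ := by
    have h3 : A*((j:ℝ)*δ) ≤ A*x := by gcongr
    have key : B*y ≤ B*(L + 3*δ) := by nlinarith [habs.2]
    exact le_of_mul_le_mul_left key hB
  set k : ℤ := ⌊y/δ⌋ with hkdef
  set b0 : ℤ := ⌊L/δ⌋ with hb0def
  have hkb : b0 ≤ k := Int.floor_le_floor (by gcongr)
  have hk3 : k ≤ b0 + 3 := by
    have h1 : y/δ ≤ (L+3*δ)/δ := by gcongr
    have h2 : (L+3*δ)/δ = L/δ + 3 := by field_simp
    have h4 : k ≤ ⌊L/δ + (3:ℤ)⌋ := Int.floor_le_floor (by push_cast; linarith)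
    rwa [Int.floor_add_intCast] at h4
  refine ⟨j, (k - b0).toNat, ?_, by omega, ⟨hjx, hxj⟩, ?_⟩
  · exact Nat.floor_mono (by gcongr <;> first | exact hx1.le | skip)
  · have hco : sbase A B γ ε j + ((k - b0).toNat : ℝ) = (k:ℝ) := by
      have : ((k - b0).toNat : ℤ) = k - b0 := Int.toNat_of_nonneg (by omega)
      have h5 : (((k - b0).toNat : ℤ) : ℝ) = (k:ℝ) - (b0:ℝ) := by rw [this]; push_cast; try ring
      rw [sbase]
      push_cast at h5 ⊢
      rw [h5]
      ring
    rw [hco]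
    constructor
    · have h1 : (k:ℝ) ≤ y/δ := Int.floor_le _
      calc (k:ℝ)*δ ≤ (y/δ)*δ := by gcongr
        _ = y := by field_simp
    · have h1 : y/δ < (k:ℝ) + 1 := Int.lt_floor_add_one _
      have := (div_lt_iff₀ hδ).1 h1
      linarith

-- also copy tsum_ite lemma
lemma tsum_ite_le_mul {x : ℝ≥0∞} {P : ℕ → Prop} [DecidablePred P] {C : ℕ}
    (hP : ∀ c, P c → c < C) :
    (∑' c : ℕ, if P c then x else 0) ≤ C * x := by
  calc (∑' c : ℕ, if P c then x else 0)
      = ∑ c ∈ Finset.range C, (if P c then x else 0) := by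
        refine tsum_eq_sum ?_
        intro c hc
        rw [if_neg]
        exact fun h => hc (Finset.mem_range.2 (hP c h))
    _ ≤ ∑ _c ∈ Finset.range C, x := Finset.sum_le_sum (fun c _ => by split <;> simp)
    _ = C * x := by simp [Finset.sum_const, nsmul_eq_mul]

lemma covCover (n m p : ℕ) (hn : 1 ≤ n) (hm : 1 ≤ m) (hp : 1 ≤ p) (ψ : ℕ → ℝ)
    (hψpos : ∀ q, 0 < ψ q) (hψanti : Antitone ψ) (N : ℕ) :
    {xy : ℝ × ℝ | xy.1 ∈ Set.Ico (0 : ℝ) 1 ∧ xy.2 ∈ Set.Ico (0 : ℝ) 1 ∧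
        {abc : ℕ × ℕ × ℕ | 1 ≤ abc.1 ∧ 1 ≤ abc.2.1 ∧
          |(abc.1 : ℝ) ^ n * xy.1 + (abc.2.1 : ℝ) ^ m * xy.2 - (abc.2.2 : ℝ) ^ p| <
            ψ (max (abc.1 ^ n) (abc.2.1 ^ m))}.Infinite} ⊆ ⋃ i, covSet n m p ψ N i := by
  rintro ⟨x, y⟩ ⟨⟨hx0, hx1⟩, ⟨hy0, hy1⟩, hinf⟩
  set Mc : ℕ := ⌈(((N+2)^n : ℕ) : ℝ) + (((N+2)^m : ℕ) : ℝ) + ψ 0⌉₊ with hMc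
  have hcube : (Set.Iic (N+1) ×ˢ Set.Iic (N+1) ×ˢ Set.Iic Mc : Set (ℕ×ℕ×ℕ)).Finite :=
    (Set.finite_Iic _).prod ((Set.finite_Iic _).prod (Set.finite_Iic _))
  obtain ⟨⟨a0, b0, c⟩, hT, hnc⟩ := (hinf.diff hcube).nonempty
  obtain ⟨ha0, hb0, hstrip0⟩ := hT
  replace ha0 : 1 ≤ a0 := ha0
  replace hb0 : 1 ≤ b0 := hb0
  obtain ⟨a, rfl⟩ : ∃ a, a0 = a + 1 := ⟨a0 - 1, by omega⟩
  obtain ⟨b, rfl⟩ : ∃ b, b0 = b + 1 := ⟨b0 - 1, by omega⟩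
  simp only [Set.mem_prod, Set.mem_Iic, not_and_or, not_le] at hnc
  have hA : (0:ℝ) < (((a+1)^n : ℕ):ℝ) := by positivity
  have hB : (0:ℝ) < (((b+1)^m : ℕ):ℝ) := by positivity
  have hstrip : |(((a+1)^n : ℕ):ℝ) * x + (((b+1)^m : ℕ):ℝ) * y - (c:ℝ)^p|
      < ψ (Hb n m a b) := by
    rw [Hb]; exact_mod_cast hstrip0
  have hAH : (((a+1)^n : ℕ):ℝ) ≤ ((Hb n m a b : ℕ):ℝ) := by
    exact_mod_cast (le_max_left _ _ : (a+1)^n ≤ Hb n m a b)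
  have hBH : (((b+1)^m : ℕ):ℝ) ≤ ((Hb n m a b : ℕ):ℝ) := by
    exact_mod_cast (le_max_right _ _ : (b+1)^m ≤ Hb n m a b)
  have hψH : ψ (Hb n m a b) ≤ ψ 0 := hψanti (Nat.zero_le _)
  have habs := abs_lt.1 hstrip
  have hAx : (((a+1)^n : ℕ):ℝ) * x ≤ (((a+1)^n : ℕ):ℝ) := by nlinarith
  have hBy : (((b+1)^m : ℕ):ℝ) * y ≤ (((b+1)^m : ℕ):ℝ) := by nlinarith
  have hcp : (c:ℝ)^p < 2*((Hb n m a b : ℕ):ℝ) + ψ 0 := by nlinarith [habs.1]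
  have hcr : (c:ℝ) ≤ (2*((Hb n m a b : ℕ):ℝ) + ψ 0)^(1/(p:ℝ)) := by
    have hc0 : (0:ℝ) ≤ (c:ℝ) := c.cast_nonneg
    have hpne : (p:ℝ) ≠ 0 := by positivity
    have hid : ((c:ℝ)^p : ℝ)^(1/(p:ℝ)) = (c:ℝ) := by
      rw [← Real.rpow_natCast (c:ℝ) p, ← Real.rpow_mul hc0, mul_one_div, div_self hpne,
        Real.rpow_one]
    calc (c:ℝ) = ((c:ℝ)^p)^(1/(p:ℝ)) := hid.symm
      _ ≤ _ := Real.rpow_le_rpow (by positivity) hcp.le (by positivity)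
  have hNab : N ≤ max a b := by
    by_contra hcon
    push_neg at hcon
    have haN : a + 1 ≤ N + 1 := by omega
    have hbN : b + 1 ≤ N + 1 := by omega
    have hcMc : c ≤ Mc := by
      have h1 : c ≤ c^p := Nat.le_self_pow (by omega) _
      have h2 : ((c^p : ℕ):ℝ) ≤ (((N+2)^n : ℕ) : ℝ) + (((N+2)^m : ℕ) : ℝ) + ψ 0 := by
        have hAn : (((a+1)^n : ℕ):ℝ) ≤ (((N+2)^n : ℕ):ℝ) := by
          exact_mod_cast Nat.pow_le_pow_left (by omega) n
        have hBn : (((b+1)^m : ℕ):ℝ) ≤ (((N+2)^m : ℕ):ℝ) := by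
          exact_mod_cast Nat.pow_le_pow_left (by omega) m
        have hcp2 : ((c^p : ℕ):ℝ) = (c:ℝ)^p := by push_cast; ring
        rw [hcp2]
        nlinarith [habs.1]
      have h3 : (c^p : ℕ) ≤ Mc := by
        rw [hMc]
        exact_mod_cast h2.trans (Nat.le_ceil _)
      omega
    rcases hnc with h | h | h <;> omega
  rcases le_or_gt ((a+1)^n) ((b+1)^m) with hABn | hABn
  · have hBHe : ((Hb n m a b : ℕ):ℝ) = (((b+1)^m : ℕ):ℝ) := by
      rw [Hb, max_eq_right hABn]
    obtain ⟨j, o, hj, ho, hxm, hym⟩ :=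
      coverAux hA (by exact_mod_cast hABn) (hψpos (Hb n m a b)) hx0 hx1 hy0 hstrip
    have hεB : ψ (Hb n m a b) / (((b+1)^m:ℕ):ℝ) = dl n m ψ a b := by rw [dl, hBHe]
    rw [hεB] at hj hxm hym
    refine Set.mem_iUnion.2 ⟨((a,b),c,j,o), ?_⟩
    rw [covSet, if_pos ⟨hNab, hcr, hj, ho⟩, if_pos hABn]
    exact ⟨hxm, hym⟩
  · have hAHe : ((Hb n m a b : ℕ):ℝ) = (((a+1)^n : ℕ):ℝ) := by
      rw [Hb, max_eq_left hABn.le]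
    have hstrip2 : |(((b+1)^m : ℕ):ℝ) * y + (((a+1)^n : ℕ):ℝ) * x - (c:ℝ)^p|
        < ψ (Hb n m a b) := by
      rw [show (((b+1)^m : ℕ):ℝ) * y + (((a+1)^n : ℕ):ℝ) * x
        = (((a+1)^n : ℕ):ℝ) * x + (((b+1)^m : ℕ):ℝ) * y by ring]
      exact hstrip
    obtain ⟨j, o, hj, ho, hym, hxm⟩ :=
      coverAux hB (by exact_mod_cast hABn.le) (hψpos (Hb n m a b)) hy0 hy1 hx0 hstrip2
    have hεB : ψ (Hb n m a b) / (((a+1)^n:ℕ):ℝ) = dl n m ψ a b := by rw [dl, hAHe]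
    rw [hεB] at hj hxm hym
    refine Set.mem_iUnion.2 ⟨((a,b),c,j,o), ?_⟩
    rw [covSet, if_pos ⟨hNab, hcr, hj, ho⟩, if_neg (not_le.2 hABn)]
    exact ⟨hxm, hym⟩

noncomputable def gR (n m p : ℕ) (ψ : ℕ → ℝ) (f : ℝ → ℝ) (a b : ℕ) : ℝ :=
  (f (dl n m ψ a b) / dl n m ψ a b) * ((Hb n m a b : ℕ) : ℝ) ^ (1/(p:ℝ))

lemma key_ab (n m p : ℕ) (hp : 1 ≤ p) (ψ : ℕ → ℝ)
    (hψpos : ∀ q, 0 < ψ q) (hψanti : Antitone ψ) (f : ℝ → ℝ)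
    (hfnn : ∀ r, 0 < r → 0 ≤ f r) (N a b : ℕ) :
    (∑' (c:ℕ), ∑' (j:ℕ), ∑' (o:ℕ),
      (if (N ≤ max a b ∧ (c:ℝ) ≤ (2*((Hb n m a b:ℕ):ℝ) + ψ 0)^(1/(p:ℝ)) ∧
          j ≤ ⌊1/(dl n m ψ a b)⌋₊ ∧ o < 4) then ENNReal.ofReal (f (dl n m ψ a b)) else 0))
    ≤ if N ≤ max a b then
        ENNReal.ofReal (8*(2+ψ 0)*(1+ψ 0)) * ENNReal.ofReal (gR n m p ψ f a b) else 0 := by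
  set δ : ℝ := dl n m ψ a b with hδdef
  have hδpos : 0 < δ := dl_pos n m ψ hψpos a b
  have hδle : δ ≤ ψ 0 := dl_le n m ψ hψpos hψanti a b
  have hψ0 : 0 < ψ 0 := hψpos 0
  have hfδ : 0 ≤ f δ := hfnn δ hδpos
  set Hr : ℝ := ((Hb n m a b : ℕ) : ℝ) with hHrdef
  have hHr1 : (1:ℝ) ≤ Hr := Hr_one_le n m a b
  set X : ℝ := (2*Hr + ψ 0)^(1/(p:ℝ)) with hXdef
  set g : ℝ≥0∞ := ENNReal.ofReal (f δ) with hgdef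
  set Cc : ℕ := ⌊X⌋₊ + 1 with hCc
  set Cj : ℕ := ⌊1/δ⌋₊ + 1 with hCj
  set C0 : Prop := N ≤ max a b with hC0
  -- innermost sum
  have ho : ∀ (c j : ℕ), (∑' (o:ℕ),
      (if (C0 ∧ (c:ℝ) ≤ X ∧ j ≤ ⌊1/δ⌋₊ ∧ o < 4) then g else 0))
      ≤ 4 * (if (C0 ∧ (c:ℝ) ≤ X ∧ j ≤ ⌊1/δ⌋₊) then g else 0) := by
    intro c j
    by_cases hD : C0 ∧ (c:ℝ) ≤ X ∧ j ≤ ⌊1/δ⌋₊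
    · have he : ∀ o : ℕ, (C0 ∧ (c:ℝ) ≤ X ∧ j ≤ ⌊1/δ⌋₊ ∧ o < 4) ↔ o < 4 := fun o => by tauto
      simp only [he, if_pos hD]
      exact tsum_ite_le_mul (fun o h => h)
    · have he : ∀ o : ℕ, ¬(C0 ∧ (c:ℝ) ≤ X ∧ j ≤ ⌊1/δ⌋₊ ∧ o < 4) := fun o h =>
        hD ⟨h.1, h.2.1, h.2.2.1⟩
      calc (∑' (o:ℕ), (if (C0 ∧ (c:ℝ) ≤ X ∧ j ≤ ⌊1/δ⌋₊ ∧ o < 4) then g else 0)) = 0 := by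
            rw [tsum_congr (fun o => if_neg (he o)), tsum_zero]
        _ ≤ _ := zero_le
  have hj : ∀ (c : ℕ), (∑' (j:ℕ),
      (4 * (if (C0 ∧ (c:ℝ) ≤ X ∧ j ≤ ⌊1/δ⌋₊) then g else 0)))
      ≤ 4 * (Cj * (if (C0 ∧ (c:ℝ) ≤ X) then g else 0)) := by
    intro c
    rw [ENNReal.tsum_mul_left]
    apply mul_le_mul_right
    by_cases hD : C0 ∧ (c:ℝ) ≤ X
    · have he : ∀ j : ℕ, (C0 ∧ (c:ℝ) ≤ X ∧ j ≤ ⌊1/δ⌋₊) ↔ j ≤ ⌊1/δ⌋₊ := fun j => by tauto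
      simp only [he, if_pos hD]
      exact tsum_ite_le_mul (fun j h => by omega)
    · have he : ∀ j : ℕ, ¬(C0 ∧ (c:ℝ) ≤ X ∧ j ≤ ⌊1/δ⌋₊) := fun j h => hD ⟨h.1, h.2.1⟩
      calc (∑' (j:ℕ), (if (C0 ∧ (c:ℝ) ≤ X ∧ j ≤ ⌊1/δ⌋₊) then g else 0)) = 0 := by
            rw [tsum_congr (fun j => if_neg (he j)), tsum_zero]
        _ ≤ _ := zero_le
  have hc : (∑' (c:ℕ), (4 * (Cj * (if (C0 ∧ (c:ℝ) ≤ X) then g else 0))))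
      ≤ 4 * (Cj * (Cc * (if C0 then g else 0))) := by
    rw [ENNReal.tsum_mul_left]
    apply mul_le_mul_right
    rw [ENNReal.tsum_mul_left]
    apply mul_le_mul_right
    by_cases hD : C0
    · have he : ∀ c : ℕ, (C0 ∧ (c:ℝ) ≤ X) ↔ (c:ℝ) ≤ X := fun c => by tauto
      simp only [he, if_pos hD]
      refine tsum_ite_le_mul (fun c h => ?_)
      have := Nat.le_floor h
      omega
    · have he : ∀ c : ℕ, ¬(C0 ∧ (c:ℝ) ≤ X) := fun c h => hD h.1
      calc (∑' (c:ℕ), (if (C0 ∧ (c:ℝ) ≤ X) then g else 0)) = 0 := by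
            rw [tsum_congr (fun c => if_neg (he c)), tsum_zero]
        _ ≤ _ := zero_le
  have chain : (∑' (c:ℕ), ∑' (j:ℕ), ∑' (o:ℕ),
      (if (C0 ∧ (c:ℝ) ≤ X ∧ j ≤ ⌊1/δ⌋₊ ∧ o < 4) then g else 0))
      ≤ 4 * (Cj * (Cc * (if C0 then g else 0))) := by
    refine le_trans (ENNReal.tsum_le_tsum (fun c => ?_)) hc
    refine le_trans (ENNReal.tsum_le_tsum (fun j => ho c j)) (hj c)
  refine le_trans chain ?_
  by_cases hD : C0
  · rw [if_pos hD, if_pos hD]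
    -- real estimates
    have hX0 : (0:ℝ) ≤ X := by rw [hXdef]; positivity
    have hX1 : (1:ℝ) ≤ X := by
      rw [hXdef]
      exact Real.one_le_rpow (by linarith) (by positivity)
    have hXle : X ≤ (2+ψ 0) * Hr^(1/(p:ℝ)) := by
      have h1 : 2*Hr + ψ 0 ≤ (2+ψ 0)*Hr := by nlinarith
      have h2 : X ≤ ((2+ψ 0)*Hr)^(1/(p:ℝ)) := by
        rw [hXdef]
        exact Real.rpow_le_rpow (by positivity) h1 (by positivity)
      have h3 : ((2+ψ 0)*Hr)^(1/(p:ℝ)) = (2+ψ 0)^(1/(p:ℝ)) * Hr^(1/(p:ℝ)) :=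
        Real.mul_rpow (by positivity) (by positivity)
      have h4 : (2+ψ 0)^(1/(p:ℝ)) ≤ 2+ψ 0 := by
        have h5 : (1:ℝ)/(p:ℝ) ≤ 1 := by
          rw [div_le_one (by positivity : (0:ℝ) < (p:ℝ))]
          exact_mod_cast hp
        calc (2+ψ 0)^(1/(p:ℝ)) ≤ (2+ψ 0)^(1:ℝ) :=
              Real.rpow_le_rpow_of_exponent_le (by linarith) h5
          _ = 2+ψ 0 := Real.rpow_one _
      have h6 : (0:ℝ) ≤ Hr^(1/(p:ℝ)) := by positivity
      calc X ≤ (2+ψ 0)^(1/(p:ℝ)) * Hr^(1/(p:ℝ)) := h3 ▸ h2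
        _ ≤ (2+ψ 0) * Hr^(1/(p:ℝ)) := by nlinarith
    have hCcR : (Cc:ℝ) ≤ 2*((2+ψ 0) * Hr^(1/(p:ℝ))) := by
      have h1 : (⌊X⌋₊ : ℝ) ≤ X := Nat.floor_le hX0
      have : (Cc:ℝ) = (⌊X⌋₊:ℝ) + 1 := by rw [hCc]; push_cast; ring
      rw [this]
      linarith
    have hCjR : (Cj:ℝ) ≤ (1+ψ 0) * (1/δ) := by
      have h1 : (⌊1/δ⌋₊ : ℝ) ≤ 1/δ := Nat.floor_le (by positivity)
      have h2 : (1:ℝ) ≤ ψ 0 * (1/δ) := by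
        rw [mul_one_div, le_div_iff₀ hδpos, one_mul]
        exact hδle
      have : (Cj:ℝ) = (⌊1/δ⌋₊:ℝ) + 1 := by rw [hCj]; push_cast; ring
      rw [this]
      nlinarith
    have hreal : (4:ℝ) * ((Cj:ℝ) * ((Cc:ℝ) * f δ)) ≤
        (8*(2+ψ 0)*(1+ψ 0)) * gR n m p ψ f a b := by
      have hgReq : gR n m p ψ f a b = (f δ / δ) * Hr^(1/(p:ℝ)) := by
        rw [gR, ← hδdef, ← hHrdef]
      rw [hgReq]
      calc (4:ℝ) * ((Cj:ℝ) * ((Cc:ℝ) * f δ))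
          ≤ (4:ℝ) * (((1+ψ 0) * (1/δ)) * ((2*((2+ψ 0) * Hr^(1/(p:ℝ)))) * f δ)) := by
            gcongr <;> positivity
        _ = (8*(2+ψ 0)*(1+ψ 0)) * ((f δ / δ) * Hr^(1/(p:ℝ))) := by
            field_simp
            ring
    calc (4:ℝ≥0∞) * ((Cj:ℝ≥0∞) * ((Cc:ℝ≥0∞) * g)) =
        ENNReal.ofReal ((4:ℝ) * ((Cj:ℝ) * ((Cc:ℝ) * f δ))) := by
          rw [hgdef, ENNReal.ofReal_mul (by norm_num), ENNReal.ofReal_mul (by positivity),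
            ENNReal.ofReal_mul (by positivity)]
          norm_num [ENNReal.ofReal_natCast]
      _ ≤ ENNReal.ofReal ((8*(2+ψ 0)*(1+ψ 0)) * gR n m p ψ f a b) :=
          ENNReal.ofReal_le_ofReal hreal
      _ = ENNReal.ofReal (8*(2+ψ 0)*(1+ψ 0)) * ENNReal.ofReal (gR n m p ψ f a b) :=
          ENNReal.ofReal_mul (by positivity)
  · rw [if_neg hD, if_neg hD]
    simp

lemma covSum_le (n m p : ℕ) (hp : 1 ≤ p) (ψ : ℕ → ℝ)
    (hψpos : ∀ q, 0 < ψ q) (hψanti : Antitone ψ) (f : ℝ → ℝ) (hfmono : Monotone f)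
    (hfnn : ∀ r, 0 < r → 0 ≤ f r) (hf00 : f 0 ≤ 0) (N : ℕ) :
    (∑' i : (ℕ×ℕ)×ℕ×ℕ×ℕ, ENNReal.ofReal (f (EMetric.diam (covSet n m p ψ N i)).toReal))
    ≤ ENNReal.ofReal (8*(2+ψ 0)*(1+ψ 0)) *
      ∑' ab : ℕ×ℕ, (if N ≤ max ab.1 ab.2 then ENNReal.ofReal (gR n m p ψ f ab.1 ab.2) else 0) := by
  have hterm : ∀ i : (ℕ×ℕ)×ℕ×ℕ×ℕ,
      ENNReal.ofReal (f (EMetric.diam (covSet n m p ψ N i)).toReal) ≤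
      (if (N ≤ max i.1.1 i.1.2 ∧
          (i.2.1:ℝ) ≤ (2*((Hb n m i.1.1 i.1.2:ℕ):ℝ) + ψ 0)^(1/(p:ℝ)) ∧
          i.2.2.1 ≤ ⌊1/(dl n m ψ i.1.1 i.1.2)⌋₊ ∧ i.2.2.2 < 4)
        then ENNReal.ofReal (f (dl n m ψ i.1.1 i.1.2)) else 0) := by
    intro i
    rw [covSet]
    split
    · rename_i hcond
      have hδpos := dl_pos n m ψ hψpos i.1.1 i.1.2
      apply ENNReal.ofReal_le_ofReal
      apply hfmono
      apply ENNReal.toReal_le_of_le_ofReal hδpos.le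
      split <;> exact diam_sq_le _ _ _
    · rename_i hcond
      simp only [EMetric.diam, EMetric.diam_empty, ENNReal.toReal_zero]
      exact (ENNReal.ofReal_eq_zero.2 hf00).le
  calc (∑' i : (ℕ×ℕ)×ℕ×ℕ×ℕ, ENNReal.ofReal (f (EMetric.diam (covSet n m p ψ N i)).toReal))
      ≤ ∑' i : (ℕ×ℕ)×ℕ×ℕ×ℕ,
        (if (N ≤ max i.1.1 i.1.2 ∧
            (i.2.1:ℝ) ≤ (2*((Hb n m i.1.1 i.1.2:ℕ):ℝ) + ψ 0)^(1/(p:ℝ)) ∧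
            i.2.2.1 ≤ ⌊1/(dl n m ψ i.1.1 i.1.2)⌋₊ ∧ i.2.2.2 < 4)
          then ENNReal.ofReal (f (dl n m ψ i.1.1 i.1.2)) else 0) := ENNReal.tsum_le_tsum hterm
    _ = ∑' (ab : ℕ×ℕ), ∑' (c : ℕ), ∑' (j : ℕ), ∑' (o : ℕ),
        (if (N ≤ max ab.1 ab.2 ∧
            (c:ℝ) ≤ (2*((Hb n m ab.1 ab.2:ℕ):ℝ) + ψ 0)^(1/(p:ℝ)) ∧
            j ≤ ⌊1/(dl n m ψ ab.1 ab.2)⌋₊ ∧ o < 4)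
          then ENNReal.ofReal (f (dl n m ψ ab.1 ab.2)) else 0) := by
        rw [ENNReal.tsum_prod']
        refine tsum_congr (fun ab => ?_)
        rw [ENNReal.tsum_prod']
        refine tsum_congr (fun c => ?_)
        rw [ENNReal.tsum_prod']
    _ ≤ ∑' (ab : ℕ×ℕ), (if N ≤ max ab.1 ab.2 then
          ENNReal.ofReal (8*(2+ψ 0)*(1+ψ 0)) * ENNReal.ofReal (gR n m p ψ f ab.1 ab.2)
        else 0) :=
        ENNReal.tsum_le_tsum (fun ab => key_ab n m p hp ψ hψpos hψanti f hfnn N ab.1 ab.2)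
    _ = ENNReal.ofReal (8*(2+ψ 0)*(1+ψ 0)) *
        ∑' ab : ℕ×ℕ, (if N ≤ max ab.1 ab.2 then ENNReal.ofReal (gR n m p ψ f ab.1 ab.2) else 0) := by
        rw [← ENNReal.tsum_mul_left]
        refine tsum_congr (fun ab => ?_)
        by_cases h : N ≤ max ab.1 ab.2 <;> simp [h]

theorem stmt19 (n m p : ℕ) (hn : 1 ≤ n) (hm : 1 ≤ m) (hp : 1 ≤ p)
    (hcase : (n = 1 ∧ m = 1 ∧ p = 1) ∨ 2 ≤ Nat.gcd n m)
    (ψ : ℕ → ℝ) (hψpos : ∀ q, 0 < ψ q) (hψanti : Antitone ψ)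
    (f : ℝ → ℝ) (hfmono : Monotone f) (hf0 : Filter.Tendsto f (nhdsWithin 0 (Set.Ioi 0)) (nhds 0))
    (hf2 : MonotoneOn (fun r => f r / r ^ 2) (Set.Ioi (0 : ℝ)) ∨
      AntitoneOn (fun r => f r / r ^ 2) (Set.Ioi (0 : ℝ)))
    (hsum : Summable (fun ab : ℕ × ℕ =>
      (f (ψ (max ((ab.1 + 1) ^ n) ((ab.2 + 1) ^ m)) /
          ((max ((ab.1 + 1) ^ n) ((ab.2 + 1) ^ m) : ℕ) : ℝ)) /
        (ψ (max ((ab.1 + 1) ^ n) ((ab.2 + 1) ^ m)) /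
          ((max ((ab.1 + 1) ^ n) ((ab.2 + 1) ^ m) : ℕ) : ℝ))) *
        ((max ((ab.1 + 1) ^ n) ((ab.2 + 1) ^ m) : ℕ) : ℝ) ^ (1 / (p : ℝ)))) :
    Measure.mkMetric (fun r : ℝ≥0∞ => ENNReal.ofReal (f r.toReal))
      {xy : ℝ × ℝ | xy.1 ∈ Set.Ico (0 : ℝ) 1 ∧ xy.2 ∈ Set.Ico (0 : ℝ) 1 ∧
        {abc : ℕ × ℕ × ℕ | 1 ≤ abc.1 ∧ 1 ≤ abc.2.1 ∧
          |(abc.1 : ℝ) ^ n * xy.1 + (abc.2.1 : ℝ) ^ m * xy.2 - (abc.2.2 : ℝ) ^ p| <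
            ψ (max (abc.1 ^ n) (abc.2.1 ^ m))}.Infinite} = 0 := by
  classical
  have hfnn : ∀ r, 0 < r → 0 ≤ f r := by
    intro r hr
    refine le_of_tendsto hf0 ?_
    have hIoo : Set.Ioo (0:ℝ) r ∈ nhdsWithin 0 (Set.Ioi 0) :=
      Ioo_mem_nhdsGT_of_mem ⟨le_refl _, hr⟩
    filter_upwards [hIoo] with s hs
    exact hfmono hs.2.le
  have hf00 : f 0 ≤ 0 := by
    refine ge_of_tendsto hf0 ?_
    filter_upwards [self_mem_nhdsWithin] with s hs
    exact hfmono (le_of_lt hs)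
  have hgnn : ∀ ab : ℕ×ℕ, 0 ≤ gR n m p ψ f ab.1 ab.2 := by
    intro ab
    have hδpos := dl_pos n m ψ hψpos ab.1 ab.2
    have h1 := hfnn _ hδpos
    have h2 : (0:ℝ) ≤ ((Hb n m ab.1 ab.2 : ℕ):ℝ)^(1/(p:ℝ)) := by positivity
    exact mul_nonneg (div_nonneg h1 hδpos.le) h2
  have hsum' : Summable (fun ab : ℕ×ℕ => gR n m p ψ f ab.1 ab.2) :=
    hsum.congr (fun ab => by rw [gR, dl, Hb])
  have hSfin : (∑' ab : ℕ×ℕ, ENNReal.ofReal (gR n m p ψ f ab.1 ab.2)) ≠ ⊤ := by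
    rw [← ENNReal.ofReal_tsum_of_nonneg hgnn hsum']
    exact ENNReal.ofReal_ne_top
  set box : ℕ → Finset (ℕ×ℕ) := fun N => Finset.range N ×ˢ Finset.range N with hbox
  have hboxmono : Monotone box := fun N N' h =>
    Finset.product_subset_product (Finset.range_subset_range.2 h) (Finset.range_subset_range.2 h)
  have hboxtend : Filter.Tendsto box Filter.atTop Filter.atTop :=
    Filter.tendsto_atTop_finset_of_monotone hboxmono (fun ab =>
      ⟨max ab.1 ab.2 + 1, by simp [hbox, Finset.mem_product]⟩)
  have htail : Filter.Tendsto
      (fun N => ∑' (x : {ab : ℕ×ℕ // ab ∉ box N}), ENNReal.ofReal (gR n m p ψ f x.1.1 x.1.2))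
      Filter.atTop (nhds 0) :=
    (ENNReal.tendsto_tsum_compl_atTop_zero hSfin).comp hboxtend
  have hind : ∀ N : ℕ,
      (∑' ab : ℕ×ℕ, (if N ≤ max ab.1 ab.2 then ENNReal.ofReal (gR n m p ψ f ab.1 ab.2) else 0))
      = ∑' (x : {ab : ℕ×ℕ // ab ∉ box N}), ENNReal.ofReal (gR n m p ψ f x.1.1 x.1.2) := by
    intro N
    refine Eq.trans (tsum_congr (fun ab => ?_)) (tsum_subtype {x : ℕ×ℕ | x ∉ box N}
      (fun ab => ENNReal.ofReal (gR n m p ψ f ab.1 ab.2))).symm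
    rw [Set.indicator_apply]
    have hiff : (ab ∈ {x : ℕ×ℕ | x ∉ box N}) ↔ N ≤ max ab.1 ab.2 := by
      simp only [Set.mem_setOf_eq, hbox, Finset.mem_product, Finset.mem_range, not_and_or,
        not_lt, le_max_iff]
    by_cases h : N ≤ max ab.1 ab.2
    · rw [if_pos h, if_pos (hiff.2 h)]
    · rw [if_neg h, if_neg (fun hmem => h (hiff.1 hmem))]
  have hr : Filter.Tendsto (fun N : ℕ => ENNReal.ofReal (ψ 0 / ((N:ℝ)+1)))
      Filter.atTop (nhds 0) := by
    rw [show (0:ℝ≥0∞) = ENNReal.ofReal 0 by simp]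
    apply ENNReal.tendsto_ofReal
    have h1 := tendsto_const_div_atTop_nhds_zero_nat (ψ 0)
    have h2 := h1.comp (Filter.tendsto_add_atTop_nat 1)
    have h3 : ((fun n : ℕ => ψ 0 / (n:ℝ)) ∘ fun a : ℕ => a + 1)
        = fun a : ℕ => ψ 0 / ((a:ℝ)+1) := by
      funext a
      simp [Function.comp]
    rwa [h3] at h2
  have hle := Measure.mkMetric_le_liminf_tsum
    {xy : ℝ × ℝ | xy.1 ∈ Set.Ico (0 : ℝ) 1 ∧ xy.2 ∈ Set.Ico (0 : ℝ) 1 ∧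
        {abc : ℕ × ℕ × ℕ | 1 ≤ abc.1 ∧ 1 ≤ abc.2.1 ∧
          |(abc.1 : ℝ) ^ n * xy.1 + (abc.2.1 : ℝ) ^ m * xy.2 - (abc.2.2 : ℝ) ^ p| <
            ψ (max (abc.1 ^ n) (abc.2.1 ^ m))}.Infinite}
    (fun N : ℕ => ENNReal.ofReal (ψ 0 / ((N:ℝ)+1))) hr (covSet n m p ψ)
    (Filter.Eventually.of_forall (fun N i => covDiam n m p hn hm ψ hψpos hψanti N i))
    (Filter.Eventually.of_forall (fun N => covCover n m p hn hm hp ψ hψpos hψanti N))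
    (fun r => ENNReal.ofReal (f r.toReal))
  refine le_antisymm (hle.trans ?_) zero_le
  have hbnd : ∀ N : ℕ,
      (∑' i, ENNReal.ofReal (f (EMetric.diam (covSet n m p ψ N i)).toReal))
      ≤ ENNReal.ofReal (8*(2+ψ 0)*(1+ψ 0)) *
        ∑' (x : {ab : ℕ×ℕ // ab ∉ box N}), ENNReal.ofReal (gR n m p ψ f x.1.1 x.1.2) :=
    fun N => (covSum_le n m p hp ψ hψpos hψanti f hfmono hfnn hf00 N).trans_eq
      (by rw [hind N])
  have htendK : Filter.Tendsto (fun N : ℕ => ENNReal.ofReal (8*(2+ψ 0)*(1+ψ 0)) *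
      ∑' (x : {ab : ℕ×ℕ // ab ∉ box N}), ENNReal.ofReal (gR n m p ψ f x.1.1 x.1.2))
      Filter.atTop (nhds 0) := by
    have h1 := ENNReal.Tendsto.const_mul (a := ENNReal.ofReal (8*(2+ψ 0)*(1+ψ 0)))
      htail (Or.inr ENNReal.ofReal_ne_top)
    simpa using h1
  calc Filter.liminf (fun N : ℕ =>
        ∑' i, ENNReal.ofReal (f (EMetric.diam (covSet n m p ψ N i)).toReal)) Filter.atTop
      ≤ Filter.liminf (fun N : ℕ => ENNReal.ofReal (8*(2+ψ 0)*(1+ψ 0)) *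
        ∑' (x : {ab : ℕ×ℕ // ab ∉ box N}), ENNReal.ofReal (gR n m p ψ f x.1.1 x.1.2))
        Filter.atTop := Filter.liminf_le_liminf (Filter.Eventually.of_forall hbnd)
    _ = 0 := htendK.liminf_eq
end
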